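/- arXiv:2003.13477 — 4 statements merged into one kernel-verified Lean document; each statement's English description precedes it below -/
import Mathlib

section
/- A linear operator $T$ between $RN$ modules $S^1$ and $S^2$ is almost surely bounded (i.e., there exists $\xi \in L^0_+(\mathcal{F})$ with $\|Tx\|_2 \le \xi\|x\|_1$ for all $x$) if and only if $T$ is a continuous module homomorphism with respect to the $(\varepsilon,\lambda)$-topologies. -/
/- Preamble: random normed modules over `L⁰(𝓕,K)`, the `(ε,λ)`-topology,
`C₀`-semigroups of continuous module homomorphisms and resolvents. -/

open MeasureTheory MeasureTheory.AEEqFun Filter Set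
noncomputable section

namespace MeasureTheory.AEEqFun
variable {α : Type*} [MeasurableSpace α] {μ : Measure α}
variable {γ : Type*} [TopologicalSpace γ] [CommRing γ] [IsTopologicalRing γ]

noncomputable instance instNatCast' : NatCast (α →ₘ[μ] γ) := ⟨fun n => const α (n : γ)⟩
noncomputable instance instIntCast' : IntCast (α →ₘ[μ] γ) := ⟨fun n => const α (n : γ)⟩

/-- `L⁰(𝓕,K)` is a commutative ring under the pointwise operations. -/
noncomputable instance instCommRing' : CommRing (α →ₘ[μ] γ) :=
  toGerm_injective.commRing toGerm zero_toGerm one_toGerm add_toGerm mul_toGerm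
    neg_toGerm sub_toGerm (fun n x => smul_toGerm n x) (fun n x => smul_toGerm n x)
    pow_toGerm (fun _ => rfl) (fun _ => rfl)
end MeasureTheory.AEEqFun

namespace RNTheory

variable {Ω : Type*} [MeasurableSpace Ω] {μ : Measure Ω}

/-- The pointwise absolute value `|ξ| ∈ L⁰₊(𝓕)` of `ξ ∈ L⁰(𝓕,K)`. -/
def l0abs {K : Type*} [RCLike K] (ξ : Ω →ₘ[μ] K) : Ω →ₘ[μ] ℝ :=
  ξ.comp (fun a => ‖a‖) continuous_norm

/-- Pointwise exponential on `L⁰(𝓕,ℝ)`. -/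
def l0exp (ξ : Ω →ₘ[μ] ℝ) : Ω →ₘ[μ] ℝ := ξ.comp Real.exp Real.continuous_exp

/-- Pointwise real part on `L⁰(𝓕,ℂ)`. -/
def l0re (ξ : Ω →ₘ[μ] ℂ) : Ω →ₘ[μ] ℝ := ξ.comp Complex.re Complex.continuous_re

/-- The embedding of `L⁰(𝓕,ℝ)` into `L⁰(𝓕,K)`. -/
def l0ofReal (K : Type*) [RCLike K] (ξ : Ω →ₘ[μ] ℝ) : Ω →ₘ[μ] K :=
  ξ.comp (fun r => (RCLike.ofReal r : K)) RCLike.continuous_ofReal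

/-- The constant element of `L⁰(𝓕,K)` given by the real number `t`. -/
def rconst (K : Type*) [RCLike K] (μ : Measure Ω) (t : ℝ) : Ω →ₘ[μ] K :=
  AEEqFun.const Ω ((RCLike.ofReal t : K))

/-- `ξ ∈ L⁰₊₊(𝓕)`, i.e. `ξ > 0` on `Ω`. -/
def L0pos (ξ : Ω →ₘ[μ] ℝ) : Prop := ∀ᵐ ω ∂μ, 0 < ξ ω

section Top

variable {S : Type*} [AddCommGroup S]

/-- The `(ε,λ)`-neighborhood of `x₀`: all `y` with `P(‖y - x₀‖ < ε) > 1 - λ`. -/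
def Nset (nrm : S → Ω →ₘ[μ] ℝ) (x₀ : S) (ε lam : ℝ) : Set S :=
  {y | 1 - lam < (μ {ω | nrm (y - x₀) ω < ε}).toReal}

theorem Nset_mono [IsFiniteMeasure μ] (nrm : S → Ω →ₘ[μ] ℝ) (x₀ : S) {ε₁ ε₂ lam₁ lam₂ : ℝ}
    (hε : ε₁ ≤ ε₂) (hlam : lam₁ ≤ lam₂) : Nset nrm x₀ ε₁ lam₁ ⊆ Nset nrm x₀ ε₂ lam₂ := by
  intro y hy
  have h1 : (μ {ω | nrm (y - x₀) ω < ε₁}).toReal ≤ (μ {ω | nrm (y - x₀) ω < ε₂}).toReal :=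
    ENNReal.toReal_mono (measure_ne_top μ _) (measure_mono (fun ω h => lt_of_lt_of_le h hε))
  exact lt_of_le_of_lt (by linarith) (lt_of_lt_of_le hy h1)

/-- The `(ε,λ)`-topology on an `RN` module. -/
def elTop [IsFiniteMeasure μ] (nrm : S → Ω →ₘ[μ] ℝ) : TopologicalSpace S where
  IsOpen U := ∀ x ∈ U, ∃ ε > (0:ℝ), ∃ lam : ℝ, 0 < lam ∧ lam < 1 ∧ Nset nrm x ε lam ⊆ U
  isOpen_univ := fun _ _ => ⟨1, one_pos, 1/2, by norm_num, by norm_num, fun _ _ => trivial⟩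
  isOpen_inter := by
    intro U V hU hV x hx
    obtain ⟨ε₁, hε₁, l₁, hl₁, hl₁', hN₁⟩ := hU x hx.1
    obtain ⟨ε₂, hε₂, l₂, hl₂, hl₂', hN₂⟩ := hV x hx.2
    refine ⟨min ε₁ ε₂, lt_min hε₁ hε₂, min l₁ l₂, lt_min hl₁ hl₂,
      lt_of_le_of_lt (min_le_left _ _) hl₁', fun y hy => ⟨?_, ?_⟩⟩
    · exact hN₁ (Nset_mono nrm x (min_le_left _ _) (min_le_left _ _) hy)
    · exact hN₂ (Nset_mono nrm x (min_le_right _ _) (min_le_right _ _) hy)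
  isOpen_sUnion := by
    intro s hs x hx
    obtain ⟨U, hUs, hxU⟩ := hx
    obtain ⟨ε, hε, lam, h1, h2, hN⟩ := hs U hUs x hxU
    exact ⟨ε, hε, lam, h1, h2, fun y hy => ⟨U, hUs, hN hy⟩⟩

/-- A sequence in an `RN` module is Cauchy (in probability). -/
def IsCauchyRN (nrm : S → Ω →ₘ[μ] ℝ) (x : ℕ → S) : Prop :=
  ∀ ε : ℝ, 0 < ε → ∃ N : ℕ, ∀ m ≥ N, ∀ n ≥ N,
    (μ {ω | ε ≤ nrm (x m - x n) ω}).toReal < ε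

/-- The `RN` module `S` is complete: every Cauchy sequence converges in the
`(ε,λ)`-topology. -/
def IsCompleteRN [IsFiniteMeasure μ] (nrm : S → Ω →ₘ[μ] ℝ) : Prop :=
  ∀ x : ℕ → S, IsCauchyRN nrm x → ∃ y, Tendsto x atTop (@nhds S (elTop nrm) y)

end Top

section RNModule

variable (K : Type*) [RCLike K] {S : Type*} [AddCommGroup S] [Module (Ω →ₘ[μ] K) S]

/-- `(S, nrm)` is a random normed module (`RN` module) over `K` with base `(Ω,𝓕,P)`. -/
structure IsRNNorm (nrm : S → Ω →ₘ[μ] ℝ) : Prop where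
  nonneg : ∀ x, 0 ≤ nrm x
  smul_eq : ∀ (ξ : Ω →ₘ[μ] K) (x : S), nrm (ξ • x) = l0abs ξ * nrm x
  add_le : ∀ x y, nrm (x + y) ≤ nrm x + nrm y
  definite : ∀ x, nrm x = 0 → x = 0

section Semigroup
variable [IsFiniteMeasure μ]

/-- A family `{T t : t ≥ 0}` of continuous module homomorphisms (equivalently, of a.s. bounded
module homomorphisms) forming a `C₀`-semigroup on the `RN` module `S`. -/
structure IsC0Semigroup (nrm : S → Ω →ₘ[μ] ℝ) (T : ℝ → S →ₗ[Ω →ₘ[μ] K] S) : Prop where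
  bounded : ∀ t, 0 ≤ t → ∃ ξ : Ω →ₘ[μ] ℝ, 0 ≤ ξ ∧ ∀ x, nrm (T t x) ≤ ξ * nrm x
  id_eq : T 0 = LinearMap.id
  comp_eq : ∀ s t, 0 ≤ s → 0 ≤ t → T (s + t) = (T s).comp (T t)
  strong_cont : ∀ x : S, Tendsto (fun t => T t x) (nhdsWithin 0 (Ioi 0)) (@nhds S (elTop nrm) x)

/-- The `C₀`-semigroup `T` is a.s. bounded: `⋁_{t ∈ [0,L]} ‖T(t)‖ ∈ L⁰₊` for some `L > 0`. -/
def IsASBounded (nrm : S → Ω →ₘ[μ] ℝ) (T : ℝ → S →ₗ[Ω →ₘ[μ] K] S) : Prop :=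
  ∃ L : ℝ, 0 < L ∧ ∃ ξ : Ω →ₘ[μ] ℝ, 0 ≤ ξ ∧ ∀ t ∈ Icc 0 L, ∀ x, nrm (T t x) ≤ ξ * nrm x

/-- `GenRel nrm T x y` says `x ∈ D(A)` and `y = A x`, where `(A, D(A))` is the infinitesimal
generator of the semigroup `T`: `y = lim_{t ↓ 0} (T(t)x - x)/t` in the `(ε,λ)`-topology. -/
def GenRel (nrm : S → Ω →ₘ[μ] ℝ) (T : ℝ → S →ₗ[Ω →ₘ[μ] K] S) (x y : S) : Prop :=
  Tendsto (fun t : ℝ => rconst K μ t⁻¹ • (T t x - x)) (nhdsWithin 0 (Ioi 0))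
    (@nhds S (elTop nrm) y)

end Semigroup

/-- `R` is the resolvent `R(ξ,A) = (ξI - A)⁻¹ ∈ B(S)` of the module homomorphism
`A : D(A) → S`, i.e. `ξ ∈ ρ(A)`. -/
structure IsResolvent (nrm : S → Ω →ₘ[μ] ℝ) (p : Submodule (Ω →ₘ[μ] K) S)
    (A : p →ₗ[Ω →ₘ[μ] K] S) (ξ : Ω →ₘ[μ] K) (R : S →ₗ[Ω →ₘ[μ] K] S) : Prop where
  mem : ∀ x : S, R x ∈ p
  right_inv : ∀ x : S, ξ • R x - A ⟨R x, mem x⟩ = x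
  left_inv : ∀ y : p, R (ξ • (y : S) - A y) = (y : S)
  bounded : ∃ c : Ω →ₘ[μ] ℝ, 0 ≤ c ∧ ∀ x, nrm (R x) ≤ c * nrm x

end RNModule

end RNTheory

open RNTheory

/-! ### Auxiliary lemmas for the proof -/

namespace RNProofAux

open RNTheory Topology
open scoped ENNReal

variable {Ω : Type*} [MeasurableSpace Ω] {μ : Measure Ω} {K : Type*} [RCLike K]

lemma l0abs_ae (ξ : Ω →ₘ[μ] K) : ⇑(l0abs ξ) =ᵐ[μ] fun ω => ‖ξ ω‖ :=
  AEEqFun.coeFn_comp _ _ _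

lemma l0abs_mul (a b : Ω →ₘ[μ] K) : l0abs (a * b) = l0abs a * l0abs b := by
  apply AEEqFun.ext
  filter_upwards [l0abs_ae (a * b), l0abs_ae a, l0abs_ae b, AEEqFun.coeFn_mul a b,
    AEEqFun.coeFn_mul (l0abs a) (l0abs b)] with ω h1 h2 h3 h4 h5
  simp only [h1, h5, h2, h3, Pi.mul_apply, h4]
  exact norm_mul _ _

lemma l0abs_zero : l0abs (0 : Ω →ₘ[μ] K) = 0 := by
  apply AEEqFun.ext
  filter_upwards [l0abs_ae (0 : Ω →ₘ[μ] K), AEEqFun.coeFn_zero (β := K) (μ := μ),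
    AEEqFun.coeFn_zero (β := ℝ) (μ := μ)] with ω h1 h2 h3
  simp [h1, h2, h3]

lemma l0abs_neg (a : Ω →ₘ[μ] K) : l0abs (-a) = l0abs a := by
  apply AEEqFun.ext
  filter_upwards [l0abs_ae (-a), l0abs_ae a, AEEqFun.coeFn_neg a] with ω h1 h2 h3
  simp [h1, h2, h3]

variable {S : Type*} [AddCommGroup S] [Module (Ω →ₘ[μ] K) S]

lemma nrm_zero {nrm : S → Ω →ₘ[μ] ℝ} (h : IsRNNorm K nrm) : nrm 0 = 0 := by
  have := h.smul_eq 0 (0 : S)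
  rw [smul_zero, l0abs_zero, zero_mul] at this
  exact this

/-- pointwise a.e. version of an `AEEqFun` inequality -/
lemma ae_of_le {f g : Ω →ₘ[μ] ℝ} (h : f ≤ g) : ∀ᵐ ω ∂μ, f ω ≤ g ω :=
  AEEqFun.coeFn_le.2 h

lemma ae_nonneg {f : Ω →ₘ[μ] ℝ} (h : 0 ≤ f) : ∀ᵐ ω ∂μ, 0 ≤ f ω := by
  filter_upwards [ae_of_le h, AEEqFun.coeFn_zero (β := ℝ) (μ := μ)] with ω h1 h2
  rw [h2] at h1; exact h1

lemma le_of_ae {f g : Ω →ₘ[μ] ℝ} (h : ∀ᵐ ω ∂μ, f ω ≤ g ω) : f ≤ g :=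
  AEEqFun.coeFn_le.1 h

lemma toReal_inter_ge [IsProbabilityMeasure μ] (A B : Set Ω) (hB : MeasurableSet B) :
    (μ A).toReal + (μ B).toReal - 1 ≤ (μ (A ∩ B)).toReal := by
  have h1 : μ A ≤ μ (A ∩ B) + μ Bᶜ := by
    calc μ A ≤ μ ((A ∩ B) ∪ Bᶜ) := measure_mono (fun ω hω => by
              by_cases hb : ω ∈ B
              · exact Or.inl ⟨hω, hb⟩
              · exact Or.inr hb)
    _ ≤ μ (A ∩ B) + μ Bᶜ := measure_union_le _ _
  have hBc : (μ Bᶜ).toReal = 1 - (μ B).toReal := by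
    rw [prob_compl_eq_one_sub hB, ENNReal.toReal_sub_of_le prob_le_one ENNReal.one_ne_top]
    simp
  have h2 : (μ A).toReal ≤ (μ (A ∩ B)).toReal + (μ Bᶜ).toReal := by
    rw [← ENNReal.toReal_add (measure_ne_top μ _) (measure_ne_top μ _)]
    exact ENNReal.toReal_mono (ENNReal.add_ne_top.2 ⟨measure_ne_top μ _, measure_ne_top μ _⟩) h1
  rw [hBc] at h2; linarith

lemma nset_isOpen [IsProbabilityMeasure μ] {nrm : S → Ω →ₘ[μ] ℝ} (h : IsRNNorm K nrm)
    (x₀ : S) {r lam : ℝ} (hr : 0 < r) (hlam : 0 < lam) :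
    @IsOpen S (elTop nrm) (Nset nrm x₀ r lam) := by
  show ∀ y₀ ∈ Nset nrm x₀ r lam, ∃ ε > (0:ℝ), ∃ lam' : ℝ, 0 < lam' ∧ lam' < 1 ∧
    Nset nrm y₀ ε lam' ⊆ Nset nrm x₀ r lam
  intro y₀ hy₀
  rcases lt_or_ge 1 lam with hlam1 | hlam1
  · refine ⟨1, one_pos, 1/2, by norm_num, by norm_num, fun y _ => ?_⟩
    simp only [Nset, Set.mem_setOf_eq]
    have : (0:ℝ) ≤ (μ {ω | nrm (y - x₀) ω < r}).toReal := ENNReal.toReal_nonneg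
    linarith
  · have hy₀' : 1 - lam < (μ {ω | nrm (y₀ - x₀) ω < r}).toReal := hy₀
    set f := ⇑(nrm (y₀ - x₀)) with hf
    have hfm : Measurable f := (nrm (y₀ - x₀)).measurable
    set s : ℕ → Set Ω := fun n => {ω | f ω < r - 1/(n+1)} with hs
    have hsm : ∀ n, MeasurableSet (s n) := fun n => hfm measurableSet_Iio
    have hmono : Monotone s := by
      intro m n hmn ω hω
      have h1 : (1:ℝ)/(n+1) ≤ 1/(m+1) := by
        apply one_div_le_one_div_of_le (by positivity)
        have : (m:ℝ) ≤ n := by exact_mod_cast hmn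
        linarith
      have hω' : f ω < r - 1/(m+1) := hω
      show f ω < r - 1/(n+1)
      linarith
    have hUnion : ⋃ n, s n = {ω | f ω < r} := by
      ext ω
      simp only [Set.mem_iUnion, Set.mem_setOf_eq, hs]
      constructor
      · rintro ⟨n, hn⟩
        have : (0:ℝ) < 1/(n+1) := by positivity
        linarith
      · intro hlt
        obtain ⟨n, hn⟩ := exists_nat_one_div_lt (show (0:ℝ) < r - f ω by linarith)
        exact ⟨n, by linarith⟩
    have hsup : (⨆ n, μ (s n)) = μ {ω | f ω < r} := by
      rw [← hUnion, hmono.directed_le.measure_iUnion]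
    have hex : ∃ n, 1 - lam < (μ (s n)).toReal := by
      by_contra hall
      push_neg at hall
      have : μ {ω | f ω < r} ≤ ENNReal.ofReal (1 - lam) := by
        rw [← hsup]
        refine iSup_le fun n => ?_
        rw [ENNReal.le_ofReal_iff_toReal_le (measure_ne_top μ _) (by linarith)]
        exact hall n
      have := ENNReal.toReal_mono ENNReal.ofReal_ne_top this
      rw [ENNReal.toReal_ofReal (by linarith)] at this
      exact absurd this (not_le.2 hy₀')
    obtain ⟨n, hn⟩ := hex
    set δ := (μ (s n)).toReal - (1 - lam) with hδdef
    have hδ : 0 < δ := by simp only [hδdef]; linarith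
    refine ⟨1/(n+1), by positivity, min δ (1/2), lt_min hδ (by norm_num),
      lt_of_le_of_lt (min_le_right _ _) (by norm_num), ?_⟩
    intro y hy
    have hy' : 1 - min δ (1/2) < (μ {ω | nrm (y - y₀) ω < 1/(n+1)}).toReal := hy
    show 1 - lam < (μ {ω | nrm (y - x₀) ω < r}).toReal
    have htri : ∀ᵐ ω ∂μ, nrm (y - x₀) ω ≤ nrm (y - y₀) ω + f ω := by
      have hcl : nrm (y - x₀) ≤ nrm (y - y₀) + nrm (y₀ - x₀) := by
        have := h.add_le (y - y₀) (y₀ - x₀)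
        rwa [sub_add_sub_cancel] at this
      filter_upwards [ae_of_le hcl, AEEqFun.coeFn_add (nrm (y - y₀)) (nrm (y₀ - x₀))]
        with ω h1 h2
      rw [h2] at h1; exact h1
    have hincl : ({ω | nrm (y - y₀) ω < 1/(n+1)} ∩ s n : Set Ω) ≤ᵐ[μ]
        ({ω | nrm (y - x₀) ω < r} : Set Ω) := by
      filter_upwards [htri] with ω h1
      intro hmem
      have h2 : nrm (y - y₀) ω < 1/(n+1) := hmem.1
      have h3 : f ω < r - 1/(n+1) := hmem.2
      show nrm (y - x₀) ω < r
      linarith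
    have h2 : (μ ({ω | nrm (y - y₀) ω < 1/(n+1)} ∩ s n)).toReal
        ≥ (μ {ω | nrm (y - y₀) ω < 1/(n+1)}).toReal + (μ (s n)).toReal - 1 :=
      toReal_inter_ge _ _ (hsm n)
    have h3 : (μ ({ω | nrm (y - y₀) ω < 1/(n+1)} ∩ s n)).toReal
        ≤ (μ {ω | nrm (y - x₀) ω < r}).toReal :=
      ENNReal.toReal_mono (measure_ne_top μ _) (measure_mono_ae hincl)
    have h4 : 1 - min δ (1/2) ≥ 1 - δ := by
      have := min_le_left δ (1/2); linarith
    linarith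

lemma l0abs_nonneg_ae (a : Ω →ₘ[μ] K) : ∀ᵐ ω ∂μ, 0 ≤ l0abs a ω := by
  filter_upwards [l0abs_ae a] with ω h1
  rw [h1]; exact norm_nonneg _

/-- The indicator of a measurable set as an element of `L⁰(𝓕,K)`. -/
def indK (K : Type*) [RCLike K] (μ : Measure Ω) {A : Set Ω} (_hA : MeasurableSet A) :
    Ω →ₘ[μ] K :=
  AEEqFun.mk (A.indicator fun _ => (1:K))
    ((stronglyMeasurable_const.indicator _hA).aestronglyMeasurable)

lemma indK_ae {A : Set Ω} (hA : MeasurableSet A) :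
    ⇑(indK K μ hA) =ᵐ[μ] A.indicator (fun _ => (1:K)) := AEEqFun.coeFn_mk _ _

lemma indK_mul_self {A : Set Ω} (hA : MeasurableSet A) :
    indK K μ hA * indK K μ hA = indK K μ hA := by
  apply AEEqFun.ext
  filter_upwards [AEEqFun.coeFn_mul (indK K μ hA) (indK K μ hA), indK_ae (μ := μ) (K := K) hA]
    with ω h1 h2
  rw [h1]
  simp only [Pi.mul_apply, h2]
  by_cases h : ω ∈ A <;> simp [h]

section Forward

variable [IsProbabilityMeasure μ]
variable {S₁ : Type*} [AddCommGroup S₁] [Module (Ω →ₘ[μ] K) S₁]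
variable {S₂ : Type*} [AddCommGroup S₂] [Module (Ω →ₘ[μ] K) S₂]
variable {nrm₁ : S₁ → Ω →ₘ[μ] ℝ} {nrm₂ : S₂ → Ω →ₘ[μ] ℝ} {T : S₁ → S₂}

lemma T_zero (hadd : ∀ x y, T (x + y) = T x + T y) : T 0 = 0 := by
  have h := hadd 0 0
  rw [add_zero] at h
  exact (left_eq_add.1 h)

lemma T_sub (hadd : ∀ x y, T (x + y) = T x + T y) (x y : S₁) : T (x - y) = T x - T y := by
  have h := hadd (x - y) y
  rw [sub_add_cancel] at h
  rw [eq_sub_iff_add_eq, ← h]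

lemma fwd_idem (h₁ : IsRNNorm K nrm₁) (h₂ : IsRNNorm K nrm₂)
    (hadd : ∀ x y, T (x + y) = T x + T y)
    {ξ₀ : Ω →ₘ[μ] ℝ} (hbd : ∀ x, nrm₂ (T x) ≤ ξ₀ * nrm₁ x)
    {e : Ω →ₘ[μ] K} (he : e * e = e) (x : S₁) : T (e • x) = e • T x := by
  have key : ∀ (e' : Ω →ₘ[μ] K), e' * e' = e' → ∀ z : S₁, (1 - e') • T (e' • z) = 0 := by
    intro e' he' z
    apply h₂.definite
    have hb := hbd (e' • z)
    rw [h₁.smul_eq] at hb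
    have hle : nrm₂ ((1 - e') • T (e' • z)) ≤ l0abs (1 - e') * (ξ₀ * (l0abs e' * nrm₁ z)) := by
      rw [h₂.smul_eq]
      apply le_of_ae
      filter_upwards [AEEqFun.coeFn_mul (l0abs (1 - e')) (nrm₂ (T (e' • z))),
        AEEqFun.coeFn_mul (l0abs (1 - e')) (ξ₀ * (l0abs e' * nrm₁ z)),
        ae_of_le hb, l0abs_nonneg_ae (1 - e')] with ω h1 h2 h3 h4
      simp only [Pi.mul_apply] at h1 h2
      rw [h1, h2]
      exact mul_le_mul_of_nonneg_left h3 h4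
    have hz : l0abs (1 - e') * (ξ₀ * (l0abs e' * nrm₁ z)) = 0 := by
      have h0 : l0abs (1 - e') * l0abs e' = 0 := by
        rw [← l0abs_mul]
        have h00 : (1 - e') * e' = 0 := by rw [sub_mul, one_mul, he', sub_self]
        rw [h00, l0abs_zero]
      have hre : l0abs (1 - e') * (ξ₀ * (l0abs e' * nrm₁ z))
          = (l0abs (1 - e') * l0abs e') * (ξ₀ * nrm₁ z) := by ring
      rw [hre, h0, zero_mul]
    rw [hz] at hle
    apply AEEqFun.ext
    filter_upwards [ae_of_le hle, ae_nonneg (h₂.nonneg ((1 - e') • T (e' • z))),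
      AEEqFun.coeFn_zero (β := ℝ) (μ := μ)] with ω ha hb' hc
    rw [hc] at ha
    rw [hc]
    exact le_antisymm ha hb'
  have he' : (1 - e) * (1 - e) = 1 - e := by
    have : (1 - e) * (1 - e) = 1 - e - (e - e * e) := by ring
    rw [this, he, sub_self, sub_zero]
  have hA : T (e • x) = e • T (e • x) := by
    have h0 := key e he x
    rw [sub_smul, one_smul, sub_eq_zero] at h0
    exact h0
  have hB : e • T ((1 - e) • x) = 0 := by
    have h0 := key (1 - e) he' x
    have h1 : (1 : Ω →ₘ[μ] K) - (1 - e) = e := by ring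
    rwa [h1] at h0
  have hdec : e • x + (1 - e) • x = x := by
    rw [← add_smul]
    have : e + (1 - e) = (1 : Ω →ₘ[μ] K) := by ring
    rw [this, one_smul]
  have : e • T x = e • T (e • x) + e • T ((1 - e) • x) := by
    conv_lhs => rw [← hdec]
    rw [hadd]
    exact smul_add e (T (e • x)) (T ((1 - e) • x))
  rw [hB, add_zero] at this
  rw [hA, ← this]

lemma fwd_simple (h₁ : IsRNNorm K nrm₁) (h₂ : IsRNNorm K nrm₂)
    (hadd : ∀ x y, T (x + y) = T x + T y)
    (hsmulK : ∀ (c : K) (x), T ((AEEqFun.const Ω c : Ω →ₘ[μ] K) • x)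
      = (AEEqFun.const Ω c : Ω →ₘ[μ] K) • T x)
    {ξ₀ : Ω →ₘ[μ] ℝ} (hbd : ∀ x, nrm₂ (T x) ≤ ξ₀ * nrm₁ x)
    (s : MeasureTheory.SimpleFunc Ω K) (x : S₁) :
    T ((AEEqFun.mk ⇑s (s.aestronglyMeasurable (μ := μ))) • x)
      = (AEEqFun.mk ⇑s (s.aestronglyMeasurable (μ := μ))) • T x := by
  induction s using MeasureTheory.SimpleFunc.induction with
  | const c hs =>
    rename_i A
    set p := MeasureTheory.SimpleFunc.piecewise A hs
      (MeasureTheory.SimpleFunc.const Ω c) (MeasureTheory.SimpleFunc.const Ω 0) with hp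
    have hmk : (AEEqFun.mk ⇑p (p.aestronglyMeasurable (μ := μ)) : Ω →ₘ[μ] K)
        = AEEqFun.const Ω c * indK K μ hs := by
      apply AEEqFun.ext
      filter_upwards [AEEqFun.coeFn_mk ⇑p (p.aestronglyMeasurable (μ := μ)),
        AEEqFun.coeFn_mul (AEEqFun.const Ω c : Ω →ₘ[μ] K) (indK K μ hs),
        indK_ae (μ := μ) (K := K) hs, AEEqFun.coeFn_const Ω c] with ω g1 g2 g3 g4
      rw [g1, g2]
      simp only [Pi.mul_apply, g3, g4]
      simp only [hp, MeasureTheory.SimpleFunc.coe_piecewise, MeasureTheory.SimpleFunc.coe_const]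
      by_cases h : ω ∈ A <;> simp [h, Set.piecewise, Function.const]
    rw [hmk, mul_smul, hsmulK, fwd_idem h₁ h₂ hadd hbd (indK_mul_self hs), ← mul_smul]
  | add hdisj hf hg =>
    rename_i f g
    have hmk : (AEEqFun.mk ⇑(f + g) ((f + g).aestronglyMeasurable (μ := μ)) : Ω →ₘ[μ] K)
        = AEEqFun.mk ⇑f (f.aestronglyMeasurable (μ := μ)) + AEEqFun.mk ⇑g (g.aestronglyMeasurable (μ := μ)) := by
      rw [AEEqFun.mk_add_mk]
      apply AEEqFun.ext
      filter_upwards [AEEqFun.coeFn_mk (⇑f + ⇑g)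
        (f.aestronglyMeasurable.add g.aestronglyMeasurable),
        AEEqFun.coeFn_mk ⇑(f + g) (f + g).aestronglyMeasurable] with ω g1 g2
      rw [g1, g2, MeasureTheory.SimpleFunc.coe_add]
    rw [hmk, add_smul, hadd, hf, hg, add_smul]

lemma fwd_linear (h₁ : IsRNNorm K nrm₁) (h₂ : IsRNNorm K nrm₂)
    (hadd : ∀ x y, T (x + y) = T x + T y)
    (hsmulK : ∀ (c : K) (x), T ((AEEqFun.const Ω c : Ω →ₘ[μ] K) • x)
      = (AEEqFun.const Ω c : Ω →ₘ[μ] K) • T x)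
    {ξ₀ : Ω →ₘ[μ] ℝ} (hξ₀ : 0 ≤ ξ₀) (hbd : ∀ x, nrm₂ (T x) ≤ ξ₀ * nrm₁ x)
    (ξ : Ω →ₘ[μ] K) (x : S₁) : T (ξ • x) = ξ • T x := by
  set s : ℕ → MeasureTheory.SimpleFunc Ω K :=
    fun n => MeasureTheory.SimpleFunc.approxOn ⇑ξ ξ.measurable Set.univ 0 (Set.mem_univ 0) n
    with hsdef
  have htend : ∀ ω, Tendsto (fun n => s n ω) atTop (𝓝 (ξ ω)) := fun ω =>
    MeasureTheory.SimpleFunc.tendsto_approxOn ξ.measurable (Set.mem_univ 0) (by simp)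
  set mkn : ℕ → Ω →ₘ[μ] K :=
    fun n => AEEqFun.mk ⇑(s n) ((s n).aestronglyMeasurable (μ := μ)) with hmkn
  have hTs : ∀ n, T (mkn n • x) = mkn n • T x := fun n =>
    fwd_simple h₁ h₂ hadd hsmulK hbd (s n) x
  set η := nrm₂ (T (ξ • x) - ξ • T x) with hηdef
  have hkey : ∀ n, ∀ᵐ ω ∂μ,
      η ω ≤ ‖ξ ω - s n ω‖ * (ξ₀ ω * nrm₁ x ω + nrm₂ (T x) ω) := by
    intro n
    have hdecomp : T (ξ • x) - ξ • T x
        = T ((ξ - mkn n) • x) + ((mkn n - ξ) • T x) := by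
      rw [sub_smul, T_sub hadd, hTs n, sub_smul]
      abel
    have hle : η ≤ nrm₂ (T ((ξ - mkn n) • x)) + nrm₂ ((mkn n - ξ) • T x) := by
      rw [hηdef, hdecomp]; exact h₂.add_le _ _
    have hu := hbd ((ξ - mkn n) • x)
    rw [h₁.smul_eq] at hu
    have hv : nrm₂ ((mkn n - ξ) • T x) = l0abs (ξ - mkn n) * nrm₂ (T x) := by
      rw [h₂.smul_eq]
      congr 1
      rw [← l0abs_neg (mkn n - ξ), neg_sub]
    filter_upwards [ae_of_le hle,
      AEEqFun.coeFn_add (nrm₂ (T ((ξ - mkn n) • x))) (nrm₂ ((mkn n - ξ) • T x)),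
      ae_of_le hu, AEEqFun.coeFn_mul ξ₀ (l0abs (ξ - mkn n) * nrm₁ x),
      AEEqFun.coeFn_mul (l0abs (ξ - mkn n)) (nrm₁ x),
      AEEqFun.coeFn_mul (l0abs (ξ - mkn n)) (nrm₂ (T x)),
      l0abs_ae (ξ - mkn n), AEEqFun.coeFn_sub ξ (mkn n),
      AEEqFun.coeFn_mk ⇑(s n) ((s n).aestronglyMeasurable (μ := μ)),
      ae_nonneg hξ₀, ae_nonneg (h₂.nonneg (T x)), ae_nonneg (h₁.nonneg x)]
      with ω e1 e2 e3 e4 e5 e6 e7 e8 e9 e10 e11 e12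
    have hB : nrm₂ ((mkn n - ξ) • T x) ω = l0abs (ξ - mkn n) ω * nrm₂ (T x) ω := by
      rw [hv, e6]; rfl
    have hD : l0abs (ξ - mkn n) ω = ‖ξ ω - s n ω‖ := by
      rw [e7]
      simp only [e8]
      rw [Pi.sub_apply, e9]
    simp only [Pi.add_apply] at e2
    simp only [Pi.mul_apply] at e4 e5 e6
    have step : η ω ≤ nrm₂ (T ((ξ - mkn n) • x)) ω + nrm₂ ((mkn n - ξ) • T x) ω := by
      rw [← e2]; exact e1
    have step2 : nrm₂ (T ((ξ - mkn n) • x)) ω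
        ≤ ξ₀ ω * (l0abs (ξ - mkn n) ω * nrm₁ x ω) := by
      calc nrm₂ (T ((ξ - mkn n) • x)) ω ≤ (ξ₀ * (l0abs (ξ - mkn n) * nrm₁ x)) ω := e3
      _ = ξ₀ ω * (l0abs (ξ - mkn n) * nrm₁ x) ω := e4
      _ = ξ₀ ω * (l0abs (ξ - mkn n) ω * nrm₁ x ω) := by rw [e5]
    rw [hB, hD] at *
    have hring : ξ₀ ω * (‖ξ ω - s n ω‖ * nrm₁ x ω) + ‖ξ ω - s n ω‖ * nrm₂ (T x) ω
        = ‖ξ ω - s n ω‖ * (ξ₀ ω * nrm₁ x ω + nrm₂ (T x) ω) := by ring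
    linarith
  have hfin : ∀ᵐ ω ∂μ, η ω = 0 := by
    filter_upwards [ae_all_iff.2 hkey, ae_nonneg (h₂.nonneg (T (ξ • x) - ξ • T x))]
      with ω hω hnn
    refine le_antisymm ?_ hnn
    have h1 : Tendsto (fun n => ‖ξ ω - s n ω‖) atTop (𝓝 0) := by
      have h0 := (tendsto_const_nhds (x := ξ ω) (f := atTop)).sub (htend ω)
      rw [sub_self] at h0
      simpa using h0.norm
    have htnd := h1.mul_const (ξ₀ ω * nrm₁ x ω + nrm₂ (T x) ω)
    rw [zero_mul] at htnd
    exact ge_of_tendsto htnd (Filter.Eventually.of_forall hω)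
  have hη0 : η = 0 := by
    apply AEEqFun.ext
    filter_upwards [hfin, AEEqFun.coeFn_zero (β := ℝ) (μ := μ)] with ω e1 e2
    rw [e1, e2]
    rfl
  have := h₂.definite _ hη0
  rwa [sub_eq_zero] at this

lemma toReal_compl' [IsProbabilityMeasure μ] {B : Set Ω} (hB : MeasurableSet B) :
    (μ Bᶜ).toReal = 1 - (μ B).toReal := by
  rw [prob_compl_eq_one_sub hB, ENNReal.toReal_sub_of_le prob_le_one ENNReal.one_ne_top]
  simp

lemma fwd_continuous (h₁ : IsRNNorm K nrm₁) (h₂ : IsRNNorm K nrm₂)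
    (hadd : ∀ x y, T (x + y) = T x + T y)
    {ξ₀ : Ω →ₘ[μ] ℝ} (hξ₀ : 0 ≤ ξ₀) (hbd : ∀ x, nrm₂ (T x) ≤ ξ₀ * nrm₁ x) :
    @Continuous S₁ S₂ (elTop nrm₁) (elTop nrm₂) T := by
  rw [@continuous_def S₁ S₂ (elTop nrm₁) (elTop nrm₂) T]
  intro U hU
  have hU' : ∀ y ∈ U, ∃ ε > (0:ℝ), ∃ lam : ℝ, 0 < lam ∧ lam < 1 ∧ Nset nrm₂ y ε lam ⊆ U := hU
  show ∀ x ∈ T ⁻¹' U, ∃ ε > (0:ℝ), ∃ lam : ℝ, 0 < lam ∧ lam < 1 ∧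
    Nset nrm₁ x ε lam ⊆ T ⁻¹' U
  intro x₀ hx₀
  obtain ⟨ε, hε, lam, hlam0, hlam1, hsub⟩ := hU' (T x₀) hx₀
  set A : ℕ → Set Ω := fun n => {ω | (n:ℝ) ≤ ξ₀ ω} with hA
  have hAm : ∀ n, MeasurableSet (A n) := fun n =>
    measurableSet_le measurable_const ξ₀.measurable
  have hAanti : Antitone A := by
    intro m n hmn ω hω
    have h : (m:ℝ) ≤ (n:ℝ) := by exact_mod_cast hmn
    exact le_trans h hω
  have hInter : (⋂ n, A n) = ∅ := by
    ext ω
    simp only [Set.mem_iInter, Set.mem_empty_iff_false, iff_false, not_forall, hA,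
      Set.mem_setOf_eq, not_le]
    obtain ⟨n, hn⟩ := exists_nat_gt (ξ₀ ω)
    exact ⟨n, hn⟩
  have htnd := tendsto_measure_iInter_atTop (μ := μ)
    (fun n => (hAm n).nullMeasurableSet) hAanti ⟨0, measure_ne_top μ _⟩
  rw [hInter, measure_empty] at htnd
  have hpos : (0:ℝ≥0∞) < ENNReal.ofReal (lam/2) := ENNReal.ofReal_pos.2 (by linarith)
  obtain ⟨n, hn⟩ := ((tendsto_order.1 htnd).2 _ hpos).exists
  set M : ℝ := (n:ℝ) + 1 with hM
  have hM0 : 0 < M := by positivity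
  refine ⟨ε/M, by positivity, lam/2, by linarith, by linarith, ?_⟩
  intro y hy
  have hy' : 1 - lam/2 < (μ {ω | nrm₁ (y - x₀) ω < ε/M}).toReal := hy
  have hTsub : T (y - x₀) = T y - T x₀ := T_sub hadd y x₀
  apply hsub
  show 1 - lam < (μ {ω | nrm₂ (T y - T x₀) ω < ε}).toReal
  set B : Set Ω := {ω | ξ₀ ω < M} with hB
  have hBm : MeasurableSet B := measurableSet_lt ξ₀.measurable measurable_const
  have hBc : 1 - lam/2 ≤ (μ B).toReal := by
    have h1 : Bᶜ ⊆ A n := by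
      intro ω hω
      simp only [hB, Set.mem_compl_iff, Set.mem_setOf_eq, not_lt] at hω
      show (n:ℝ) ≤ ξ₀ ω
      linarith
    have h2 : (μ Bᶜ).toReal < lam/2 :=
      lt_of_le_of_lt (ENNReal.toReal_mono (measure_ne_top μ _) (measure_mono h1))
        (ENNReal.toReal_lt_of_lt_ofReal hn)
    have h3 := toReal_compl' (μ := μ) hBm
    linarith
  have hinc : ({ω | nrm₁ (y - x₀) ω < ε/M} ∩ B : Set Ω) ≤ᵐ[μ]
      ({ω | nrm₂ (T y - T x₀) ω < ε} : Set Ω) := by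
    filter_upwards [ae_of_le (hbd (y - x₀)), AEEqFun.coeFn_mul ξ₀ (nrm₁ (y - x₀)),
      ae_nonneg hξ₀, ae_nonneg (h₁.nonneg (y - x₀))] with ω e1 e2 e3 e4
    intro hmem
    have hlt1 : nrm₁ (y - x₀) ω < ε/M := hmem.1
    have hlt2 : ξ₀ ω < M := hmem.2
    show nrm₂ (T y - T x₀) ω < ε
    rw [← hTsub]
    simp only [Pi.mul_apply] at e2
    calc nrm₂ (T (y - x₀)) ω ≤ (ξ₀ * nrm₁ (y - x₀)) ω := e1
    _ = ξ₀ ω * nrm₁ (y - x₀) ω := e2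
    _ < M * (ε/M) := mul_lt_mul'' hlt2 hlt1 e3 e4
    _ = ε := by field_simp
  have h4 := toReal_inter_ge (μ := μ) {ω | nrm₁ (y - x₀) ω < ε/M} B hBm
  have h5 : (μ ({ω | nrm₁ (y - x₀) ω < ε/M} ∩ B)).toReal
      ≤ (μ {ω | nrm₂ (T y - T x₀) ω < ε}).toReal :=
    ENNReal.toReal_mono (measure_ne_top μ _) (measure_mono_ae hinc)
  linarith

end Forward

section Backward

variable [IsProbabilityMeasure μ]
variable {S₁ : Type*} [AddCommGroup S₁] [Module (Ω →ₘ[μ] K) S₁]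
variable {S₂ : Type*} [AddCommGroup S₂] [Module (Ω →ₘ[μ] K) S₂]
variable {nrm₁ : S₁ → Ω →ₘ[μ] ℝ} {nrm₂ : S₂ → Ω →ₘ[μ] ℝ}

lemma l0abs_indK_ae {A : Set Ω} (hA : MeasurableSet A) :
    ⇑(l0abs (indK K μ hA)) =ᵐ[μ] A.indicator (fun _ => (1:ℝ)) := by
  filter_upwards [l0abs_ae (indK K μ hA), indK_ae (μ := μ) (K := K) hA] with ω h1 h2
  rw [h1, h2]
  by_cases h : ω ∈ A <;> simp [h]

lemma indK_mul_compl {A : Set Ω} (hA : MeasurableSet A) :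
    indK K μ hA * indK K μ hA.compl = 0 := by
  apply AEEqFun.ext
  filter_upwards [AEEqFun.coeFn_mul (indK K μ hA) (indK K μ hA.compl),
    indK_ae (μ := μ) (K := K) hA, indK_ae (μ := μ) (K := K) hA.compl,
    AEEqFun.coeFn_zero (β := K) (μ := μ)] with ω h1 h2 h3 h4
  rw [h1, h4]
  simp only [Pi.mul_apply, h2, h3, Pi.zero_apply]
  by_cases h : ω ∈ A <;> simp [h]

lemma l0abs_indK_add_compl {A : Set Ω} (hA : MeasurableSet A) :
    l0abs (indK K μ hA) + l0abs (indK K μ hA.compl) = 1 := by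
  apply AEEqFun.ext
  filter_upwards [AEEqFun.coeFn_add (l0abs (indK K μ hA)) (l0abs (indK K μ hA.compl)),
    l0abs_indK_ae (μ := μ) (K := K) hA, l0abs_indK_ae (μ := μ) (K := K) hA.compl,
    AEEqFun.coeFn_one (β := ℝ) (μ := μ)] with ω h1 h2 h3 h4
  rw [h1, h4]
  simp only [Pi.add_apply, h2, h3, Pi.one_apply]
  by_cases h : ω ∈ A <;> simp [h]

variable (K) in
/-- Combination of `x` and `y` achieving `max (‖Tx‖, ‖Ty‖)`. -/
def comb (nrm₂ : S₂ → Ω →ₘ[μ] ℝ) (T : S₁ → S₂) (x y : S₁) : S₁ :=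
  indK K μ (measurableSet_le (nrm₂ (T y)).measurable (nrm₂ (T x)).measurable) • x
    + indK K μ (measurableSet_le (nrm₂ (T y)).measurable
        (nrm₂ (T x)).measurable).compl • y

variable {T : S₁ → S₂}

lemma comb_mem (h₁ : IsRNNorm K nrm₁) {x y : S₁}
    (hx : nrm₁ x ≤ 1) (hy : nrm₁ y ≤ 1) : nrm₁ (comb K nrm₂ T x y) ≤ 1 := by
  set hA := measurableSet_le (nrm₂ (T y)).measurable (nrm₂ (T x)).measurable
  have hcl : nrm₁ (comb K nrm₂ T x y)
      ≤ l0abs (indK K μ hA) * nrm₁ x + l0abs (indK K μ hA.compl) * nrm₁ y := by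
    have h := h₁.add_le (indK K μ hA • x) (indK K μ hA.compl • y)
    rwa [h₁.smul_eq, h₁.smul_eq] at h
  apply le_of_ae
  filter_upwards [ae_of_le hcl,
    AEEqFun.coeFn_add (l0abs (indK K μ hA) * nrm₁ x) (l0abs (indK K μ hA.compl) * nrm₁ y),
    AEEqFun.coeFn_mul (l0abs (indK K μ hA)) (nrm₁ x),
    AEEqFun.coeFn_mul (l0abs (indK K μ hA.compl)) (nrm₁ y),
    l0abs_indK_ae (μ := μ) (K := K) hA, l0abs_indK_ae (μ := μ) (K := K) hA.compl,
    ae_of_le hx, ae_of_le hy, AEEqFun.coeFn_one (β := ℝ) (μ := μ),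
    ae_nonneg (h₁.nonneg x), ae_nonneg (h₁.nonneg y)]
    with ω e1 e2 e3 e4 e5 e6 e7 e8 e9 e10 e11
  rw [e9] at e7 e8 ⊢
  simp only [Pi.one_apply] at e7 e8 ⊢
  have hle : nrm₁ (comb K nrm₂ T x y) ω
      ≤ ({a | nrm₂ (T y) a ≤ nrm₂ (T x) a} : Set Ω).indicator (fun _ => (1:ℝ)) ω * nrm₁ x ω
        + ({a | nrm₂ (T y) a ≤ nrm₂ (T x) a} : Set Ω)ᶜ.indicator
            (fun _ => (1:ℝ)) ω * nrm₁ y ω := by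
    calc nrm₁ (comb K nrm₂ T x y) ω
        ≤ (l0abs (indK K μ hA) * nrm₁ x + l0abs (indK K μ hA.compl) * nrm₁ y) ω := e1
    _ = _ := by rw [e2, Pi.add_apply, e3, e4, Pi.mul_apply, Pi.mul_apply, e5, e6]
  refine le_trans hle ?_
  by_cases h : ω ∈ ({a | nrm₂ (T y) a ≤ nrm₂ (T x) a} : Set Ω)
  · rw [Set.indicator_of_mem h, Set.indicator_of_notMem (Set.notMem_compl_iff.2 h)]
    simpa using e7
  · rw [Set.indicator_of_notMem h, Set.indicator_of_mem (Set.mem_compl h)]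
    simpa using e8

lemma comb_norm (h₂ : IsRNNorm K nrm₂)
    (hadd : ∀ x y, T (x + y) = T x + T y)
    (hlin : ∀ (ξ : Ω →ₘ[μ] K) (x), T (ξ • x) = ξ • T x) (x y : S₁) :
    ⇑(nrm₂ (T (comb K nrm₂ T x y))) =ᵐ[μ]
      fun ω => max (nrm₂ (T x) ω) (nrm₂ (T y) ω) := by
  set A : Set Ω := {ω | nrm₂ (T y) ω ≤ nrm₂ (T x) ω} with hAdef
  set hA := measurableSet_le (nrm₂ (T y)).measurable (nrm₂ (T x)).measurable
  set e₁ : Ω →ₘ[μ] K := indK K μ hA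
  set e₂ : Ω →ₘ[μ] K := indK K μ hA.compl
  have hTz : T (comb K nrm₂ T x y) = e₁ • T x + e₂ • T y := by
    rw [comb, hadd, hlin, hlin]
  have hsm : ∀ (e a b : Ω →ₘ[μ] K) (u v : S₂), e • (a • u + b • v)
      = (e * a) • u + (e * b) • v := by
    intro e a b u v
    have h := smul_add e (a • u) (b • v)
    rw [h, smul_smul, smul_smul]
  have h1 : e₁ • T (comb K nrm₂ T x y) = e₁ • T x := by
    rw [hTz, hsm, indK_mul_self, indK_mul_compl,
      (zero_smul (Ω →ₘ[μ] K) (T y) : (0 : Ω →ₘ[μ] K) • T y = 0), add_zero]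
  have h2 : e₂ • T (comb K nrm₂ T x y) = e₂ • T y := by
    rw [hTz, hsm, mul_comm e₂ e₁, indK_mul_compl, indK_mul_self,
      (zero_smul (Ω →ₘ[μ] K) (T x) : (0 : Ω →ₘ[μ] K) • T x = 0), zero_add]
  have hkey : nrm₂ (T (comb K nrm₂ T x y))
      = l0abs e₁ * nrm₂ (T x) + l0abs e₂ * nrm₂ (T y) := by
    calc nrm₂ (T (comb K nrm₂ T x y))
        = (l0abs e₁ + l0abs e₂) * nrm₂ (T (comb K nrm₂ T x y)) := by
          rw [l0abs_indK_add_compl, one_mul]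
    _ = l0abs e₁ * nrm₂ (T (comb K nrm₂ T x y))
          + l0abs e₂ * nrm₂ (T (comb K nrm₂ T x y)) := by rw [add_mul]
    _ = nrm₂ (e₁ • T (comb K nrm₂ T x y)) + nrm₂ (e₂ • T (comb K nrm₂ T x y)) := by
          rw [h₂.smul_eq, h₂.smul_eq]
    _ = nrm₂ (e₁ • T x) + nrm₂ (e₂ • T y) := by rw [h1, h2]
    _ = l0abs e₁ * nrm₂ (T x) + l0abs e₂ * nrm₂ (T y) := by rw [h₂.smul_eq, h₂.smul_eq]
  rw [hkey]
  filter_upwards [AEEqFun.coeFn_add (l0abs e₁ * nrm₂ (T x)) (l0abs e₂ * nrm₂ (T y)),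
    AEEqFun.coeFn_mul (l0abs e₁) (nrm₂ (T x)), AEEqFun.coeFn_mul (l0abs e₂) (nrm₂ (T y)),
    l0abs_indK_ae (μ := μ) (K := K) hA, l0abs_indK_ae (μ := μ) (K := K) hA.compl]
    with ω e3 e4 e5 e6 e7
  rw [e3, Pi.add_apply, e4, e5, Pi.mul_apply, Pi.mul_apply, e6, e7]
  by_cases h : ω ∈ A
  · have h' : nrm₂ (T y) ω ≤ nrm₂ (T x) ω := h
    simp [Set.indicator_apply, h, max_eq_left h', h', not_lt.2 h']
  · have h' : nrm₂ (T x) ω ≤ nrm₂ (T y) ω := le_of_not_ge h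
    simp [Set.indicator_apply, h, max_eq_right h',
      (lt_of_not_ge h : nrm₂ (T x) ω < nrm₂ (T y) ω), not_le.2 (lt_of_not_ge h : nrm₂ (T x) ω < nrm₂ (T y) ω)]

lemma bwd_small (h₁ : IsRNNorm K nrm₁) (h₂ : IsRNNorm K nrm₂)
    (hadd : ∀ x y, T (x + y) = T x + T y)
    (hlin : ∀ (ξ : Ω →ₘ[μ] K) (x), T (ξ • x) = ξ • T x)
    (hcont : @Continuous S₁ S₂ (elTop nrm₁) (elTop nrm₂) T)
    {δ : ℝ} (hδ0 : 0 < δ) (hδ1 : δ < 1) :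
    ∃ c : ℝ, 0 < c ∧ ∀ x, nrm₁ x ≤ 1 →
      (μ {ω | c ≤ nrm₂ (T x) ω}).toReal ≤ δ := by
  set U : Set S₂ := Nset nrm₂ (0 : S₂) 1 δ with hU
  have hUopen : @IsOpen S₂ (elTop nrm₂) U := nset_isOpen h₂ 0 one_pos hδ0
  have hpre : @IsOpen S₁ (elTop nrm₁) (T ⁻¹' U) :=
    @Continuous.isOpen_preimage S₁ S₂ (elTop nrm₁) (elTop nrm₂) T hcont U hUopen
  have hT0 : T 0 = 0 := T_zero hadd
  have hzero_ae : ∀ᵐ ω ∂μ, (0 : Ω →ₘ[μ] ℝ) ω = 0 := by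
    filter_upwards [AEEqFun.coeFn_zero (β := ℝ) (μ := μ)] with ω h
    simpa using h
  have h0mem : (0 : S₁) ∈ T ⁻¹' U := by
    show T 0 ∈ U
    rw [hT0]
    show 1 - δ < (μ {ω | nrm₂ ((0:S₂) - 0) ω < 1}).toReal
    have hmeas : μ {ω | nrm₂ ((0:S₂) - 0) ω < 1} = 1 := by
      have h00 : ((0:S₂) - 0) = 0 := sub_zero 0
      rw [h00, nrm_zero h₂]
      have : ({ω | (0 : Ω →ₘ[μ] ℝ) ω < 1} : Set Ω) =ᵐ[μ] (Set.univ : Set Ω) := by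
        filter_upwards [hzero_ae] with ω h
        simp only [eq_iff_iff, Set.mem_setOf_eq, Set.mem_univ, iff_true, h]
        norm_num
      rw [measure_congr this, measure_univ]
    rw [hmeas]
    simp only [ENNReal.toReal_one]
    linarith
  have hpre' : ∀ z ∈ T ⁻¹' U, ∃ ε > (0:ℝ), ∃ lam : ℝ, 0 < lam ∧ lam < 1 ∧
      Nset nrm₁ z ε lam ⊆ T ⁻¹' U := hpre
  obtain ⟨ε, hε, lam, hlam0, hlam1, hsub⟩ := hpre' 0 h0mem
  refine ⟨2/ε, by positivity, fun x hx => ?_⟩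
  set y : S₁ := (AEEqFun.const Ω ((ε/2 : ℝ) : K) : Ω →ₘ[μ] K) • x with hy
  have habs : ∀ᵐ ω ∂μ, l0abs (AEEqFun.const Ω ((ε/2 : ℝ) : K) : Ω →ₘ[μ] K) ω = ε/2 := by
    filter_upwards [l0abs_ae (AEEqFun.const Ω ((ε/2 : ℝ) : K) : Ω →ₘ[μ] K),
      AEEqFun.coeFn_const Ω (((ε/2 : ℝ) : K))] with ω h1 h2
    rw [h1, h2]
    simp only [Function.const_apply]
    rw [RCLike.norm_ofReal]
    exact abs_of_pos (by positivity)
  have hnrm_y : ∀ᵐ ω ∂μ, nrm₁ (y - 0) ω = ε/2 * nrm₁ x ω := by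
    have hy0 : y - 0 = y := sub_zero y
    simp only [hy0, hy, sub_zero, h₁.smul_eq]
    filter_upwards [AEEqFun.coeFn_mul (l0abs (AEEqFun.const Ω ((ε/2 : ℝ) : K)))
      (nrm₁ x), habs] with ω h1 h2
    rw [h1, Pi.mul_apply, h2]
  have hymem : y ∈ Nset nrm₁ 0 ε lam := by
    show 1 - lam < (μ {ω | nrm₁ (y - 0) ω < ε}).toReal
    have : ({ω | nrm₁ (y - 0) ω < ε} : Set Ω) =ᵐ[μ] (Set.univ : Set Ω) := by
      filter_upwards [hnrm_y, ae_of_le hx, AEEqFun.coeFn_one (β := ℝ) (μ := μ),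
        ae_nonneg (h₁.nonneg x)] with ω h1 h2 h3 h4
      rw [h3, Pi.one_apply] at h2
      simp only [eq_iff_iff]
      exact iff_of_true (show (nrm₁ (y - 0)) ω < ε by rw [h1]; nlinarith) trivial
    rw [measure_congr this, measure_univ]
    simp only [ENNReal.toReal_one]
    linarith
  have hTy := hsub hymem
  have hTy' : 1 - δ < (μ {ω | nrm₂ (T y - 0) ω < 1}).toReal := hTy
  have hTyx : T y = (AEEqFun.const Ω ((ε/2 : ℝ) : K) : Ω →ₘ[μ] K) • T x := by
    rw [hy, hlin]
  have hinc : ({ω | nrm₂ (T y - 0) ω < 1} : Set Ω) ≤ᵐ[μ]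
      ({ω | nrm₂ (T x) ω < 2/ε} : Set Ω) := by
    have hTy0 : T y - 0 = T y := sub_zero (T y)
    have hkey : ∀ᵐ ω ∂μ, nrm₂ (T y - 0) ω = ε/2 * nrm₂ (T x) ω := by
      simp only [sub_zero, hTyx, h₂.smul_eq]
      filter_upwards [AEEqFun.coeFn_mul (l0abs (AEEqFun.const Ω ((ε/2 : ℝ) : K)))
        (nrm₂ (T x)), habs] with ω h1 h2
      rw [h1, Pi.mul_apply, h2]
    filter_upwards [hkey] with ω h1
    intro hmem
    have h2 : ε/2 * nrm₂ (T x) ω < 1 := by rw [← h1]; exact hmem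
    show nrm₂ (T x) ω < 2/ε
    rw [lt_div_iff₀ hε]
    nlinarith
  have h3 : 1 - δ < (μ {ω | nrm₂ (T x) ω < 2/ε}).toReal :=
    lt_of_lt_of_le hTy' (ENNReal.toReal_mono (measure_ne_top μ _) (measure_mono_ae hinc))
  have hcompl : ({ω | 2/ε ≤ nrm₂ (T x) ω} : Set Ω) = ({ω | nrm₂ (T x) ω < 2/ε} : Set Ω)ᶜ := by
    ext ω; simp [not_lt]
  rw [hcompl, toReal_compl' (measurableSet_lt (nrm₂ (T x)).measurable measurable_const)]
  linarith

lemma bwd_bounded (h₁ : IsRNNorm K nrm₁) (h₂ : IsRNNorm K nrm₂)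
    (hadd : ∀ x y, T (x + y) = T x + T y)
    (hlin : ∀ (ξ : Ω →ₘ[μ] K) (x), T (ξ • x) = ξ • T x)
    (hcont : @Continuous S₁ S₂ (elTop nrm₁) (elTop nrm₂) T) :
    ∃ ξ : Ω →ₘ[μ] ℝ, 0 ≤ ξ ∧ ∀ x, nrm₂ (T x) ≤ ξ * nrm₁ x := by
  classical
  set val : S₁ → ℚ → ℝ := fun x q => (μ {ω | (q:ℝ) < nrm₂ (T x) ω}).toReal with hval
  have hval_le_one : ∀ x q, val x q ≤ 1 := by
    intro x q
    have h := prob_le_one (μ := μ) (s := {ω | (q:ℝ) < nrm₂ (T x) ω})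
    have := ENNReal.toReal_mono ENNReal.one_ne_top h
    simpa using this
  set Bset : Set S₁ := {x | nrm₁ x ≤ 1} with hBset
  have h0B : (0:S₁) ∈ Bset := by
    show nrm₁ 0 ≤ 1
    rw [nrm_zero h₁]
    apply le_of_ae
    filter_upwards [AEEqFun.coeFn_zero (β := ℝ) (μ := μ),
      AEEqFun.coeFn_one (β := ℝ) (μ := μ)] with ω a b
    rw [a, b, Pi.zero_apply, Pi.one_apply]
    norm_num
  set Mq : ℚ → ℝ := fun q => sSup ((fun x => val x q) '' Bset) with hMq
  have hbdd : ∀ q, BddAbove ((fun x => val x q) '' Bset) := fun q =>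
    ⟨1, fun r hr => by obtain ⟨x, _, rfl⟩ := hr; exact hval_le_one x q⟩
  have hne : ∀ q, ((fun x => val x q) '' Bset).Nonempty := fun q => ⟨_, ⟨0, h0B, rfl⟩⟩
  have hM_le : ∀ q x, x ∈ Bset → val x q ≤ Mq q := fun q x hx =>
    le_csSup (hbdd q) ⟨x, hx, rfl⟩
  have hwit : ∀ p : ℚ × ℕ, ∃ x, x ∈ Bset ∧ Mq p.1 - 1/((p.2:ℝ)+1) < val x p.1 := by
    rintro ⟨q, k⟩
    have hlt : Mq q - 1/((k:ℝ)+1) < Mq q := by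
      have : (0:ℝ) < 1/((k:ℝ)+1) := by positivity
      linarith
    obtain ⟨r, hrmem, hr⟩ := exists_lt_of_lt_csSup (hne q) hlt
    obtain ⟨x, hx, rfl⟩ := hrmem
    exact ⟨x, hx, hr⟩
  choose u hu1 hu2 using hwit
  set e : ℚ × ℕ ≃ ℕ := Denumerable.eqv (ℚ × ℕ) with he
  set v : ℕ → S₁ := fun m => u (e.symm m) with hv
  have hv1 : ∀ m, v m ∈ Bset := fun m => hu1 _
  set y : ℕ → S₁ := fun m =>
    Nat.rec (v 0) (fun m z => comb K nrm₂ T z (v (m+1))) m with hy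
  have hysucc : ∀ m, y (m+1) = comb K nrm₂ T (y m) (v (m+1)) := fun m => rfl
  have hymem : ∀ m, y m ∈ Bset := by
    intro m; induction m with
    | zero => exact hv1 0
    | succ m ih => rw [hysucc]; exact comb_mem h₁ ih (hv1 (m+1))
  have hymax : ∀ m, ⇑(nrm₂ (T (y (m+1)))) =ᵐ[μ]
      fun ω => max (nrm₂ (T (y m)) ω) (nrm₂ (T (v (m+1))) ω) := fun m => by
    rw [hysucc]; exact comb_norm h₂ hadd hlin _ _
  have hydom : ∀ m, ∀ᵐ ω ∂μ, nrm₂ (T (v m)) ω ≤ nrm₂ (T (y m)) ω := by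
    intro m
    cases m with
    | zero => exact Filter.Eventually.of_forall (fun ω => le_refl _)
    | succ m =>
      filter_upwards [hymax m] with ω h
      rw [h]
      exact le_max_right _ _
  set N : ℕ → Ω → ℝ := fun m => Nat.rec ⇑(nrm₂ (T (y 0)))
    (fun m F => fun ω => max (F ω) (nrm₂ (T (y (m+1))) ω)) m with hN
  have hNsucc : ∀ m, N (m+1) = fun ω => max (N m ω) (nrm₂ (T (y (m+1))) ω) := fun m => rfl
  have hNmeas : ∀ m, Measurable (N m) := by
    intro m; induction m with
    | zero => exact (nrm₂ (T (y 0))).measurable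
    | succ m ih => rw [hNsucc]; exact ih.max (nrm₂ (T (y (m+1)))).measurable
  have hNmono : ∀ m ω, N m ω ≤ N (m+1) ω := fun m ω => le_max_left _ _
  have hNge : ∀ m ω, nrm₂ (T (y m)) ω ≤ N m ω := by
    intro m ω
    cases m with
    | zero => exact le_refl _
    | succ m => exact le_max_right _ _
  have hNae : ∀ m, ∀ᵐ ω ∂μ, N m ω = nrm₂ (T (y m)) ω := by
    intro m; induction m with
    | zero => exact Filter.Eventually.of_forall fun ω => rfl
    | succ m ih =>
      filter_upwards [ih, hymax m] with ω hm1 hm2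
      have hle : nrm₂ (T (y m)) ω ≤ nrm₂ (T (y (m+1))) ω := by
        rw [hm2]; exact le_max_left _ _
      rw [hNsucc]
      dsimp only
      rw [hm1]
      exact max_eq_right hle
  set G : Ω → ℝ≥0∞ := fun ω => ⨆ m, ENNReal.ofReal (N m ω) with hG
  have hGmeas : Measurable G := Measurable.iSup (fun m => (hNmeas m).ennreal_ofReal)
  have hNsmall : ∀ {c δ : ℝ},
      (∀ x, nrm₁ x ≤ 1 → (μ {ω | c ≤ nrm₂ (T x) ω}).toReal ≤ δ) →
      ∀ m, (μ {ω | c ≤ N m ω}).toReal ≤ δ := by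
    intro c δ hc m
    have hcong : ({ω | c ≤ N m ω} : Set Ω)
        =ᵐ[μ] ({ω | c ≤ nrm₂ (T (y m)) ω} : Set Ω) := by
      filter_upwards [hNae m] with ω h
      show (c ≤ N m ω) = (c ≤ nrm₂ (T (y m)) ω)
      rw [h]
    rw [measure_congr hcong]
    exact hc (y m) (hymem m)
  have hGfin : μ {ω | G ω = ∞} = 0 := by
    have hbound : ∀ j : ℕ, μ {ω | G ω = ∞} ≤ ENNReal.ofReal (1/((j:ℝ)+2)) := by
      intro j
      obtain ⟨c, hc0, hcs⟩ := bwd_small h₁ h₂ hadd hlin hcont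
        (show (0:ℝ) < 1/((j:ℝ)+2) by positivity)
        (show (1:ℝ)/((j:ℝ)+2) < 1 by
          rw [div_lt_one (by positivity)]; linarith)
      set s : ℕ → Set Ω := fun m => {ω | c < N m ω} with hsdef
      have hNmono' : ∀ ω, Monotone (fun m => N m ω) := fun ω =>
        monotone_nat_of_le_succ (fun m => hNmono m ω)
      have hsmono : Monotone s := by
        intro a b hab ω hω
        exact lt_of_lt_of_le hω (hNmono' ω hab)
      have hsub : {ω | G ω = ∞} ⊆ ⋃ m, s m := by
        intro ω hω
        have h1 : ENNReal.ofReal c < G ω := by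
          rw [Set.mem_setOf_eq] at hω
          rw [hω]
          exact ENNReal.ofReal_lt_top
        obtain ⟨m, hm⟩ := lt_iSup_iff.1 h1
        refine Set.mem_iUnion.2 ⟨m, ?_⟩
        show c < N m ω
        exact (ENNReal.ofReal_lt_ofReal_iff_of_nonneg hc0.le).1 hm
      calc μ {ω | G ω = ∞} ≤ μ (⋃ m, s m) := measure_mono hsub
      _ = ⨆ m, μ (s m) := hsmono.directed_le.measure_iUnion
      _ ≤ ENNReal.ofReal (1/((j:ℝ)+2)) := by
          refine iSup_le fun m => ?_
          rw [ENNReal.le_ofReal_iff_toReal_le (measure_ne_top μ _) (by positivity)]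
          refine le_trans (ENNReal.toReal_mono (measure_ne_top μ _)
            (measure_mono (fun ω (hω : c < N m ω) => le_of_lt hω))) ?_
          exact hNsmall hcs m
    by_contra hne0
    have hpos : 0 < (μ {ω | G ω = ∞}).toReal :=
      ENNReal.toReal_pos hne0 (measure_ne_top μ _)
    obtain ⟨n, hn⟩ := exists_nat_one_div_lt hpos
    have h1 := hbound n
    rw [ENNReal.le_ofReal_iff_toReal_le (measure_ne_top μ _) (by positivity)] at h1
    have h2 : (1:ℝ)/((n:ℝ)+2) ≤ 1/((n:ℝ)+1) := by
      apply one_div_le_one_div_of_le (by positivity)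
      linarith
    linarith
  have hdom : ∀ x ∈ Bset, ∀ᵐ ω ∂μ, ENNReal.ofReal (nrm₂ (T x) ω) ≤ G ω := by
    intro x hx
    have hEq : ∀ q : ℚ, 0 ≤ (q:ℝ) →
        μ {ω | G ω ≤ ENNReal.ofReal (q:ℝ) ∧ (q:ℝ) < nrm₂ (T x) ω} = 0 := by
      intro q hq
      set Eq : Set Ω :=
        {ω | G ω ≤ ENNReal.ofReal (q:ℝ) ∧ (q:ℝ) < nrm₂ (T x) ω} with hEqdef
      have hstep : ∀ m : ℕ,
          (μ Eq).toReal + (μ {ω | (q:ℝ) < nrm₂ (T (y m)) ω}).toReal ≤ Mq q := by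
        intro m
        set z := comb K nrm₂ T (y m) x with hz
        have hzB : z ∈ Bset := comb_mem h₁ (hymem m) hx
        have hzval : val z q ≤ Mq q := hM_le q z hzB
        have hzmax := comb_norm h₂ hadd hlin (y m) x
        set Sm : Set Ω := {ω | (q:ℝ) < nrm₂ (T (y m)) ω} with hSm
        have hSmeas : MeasurableSet Sm :=
          measurableSet_lt measurable_const (nrm₂ (T (y m))).measurable
        have hnull : μ (Eq ∩ Sm) = 0 := by
          have hsub0 : (Eq ∩ Sm : Set Ω) ≤ᵐ[μ] (∅ : Set Ω) := by
            filter_upwards [] with ω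
            rintro ⟨⟨hG1, _⟩, hq1⟩
            have ha : ENNReal.ofReal (N m ω) ≤ G ω :=
              le_iSup (fun m => ENNReal.ofReal (N m ω)) m
            have hb : N m ω ≤ (q:ℝ) :=
              (ENNReal.ofReal_le_ofReal_iff hq).1 (le_trans ha hG1)
            have hc : nrm₂ (T (y m)) ω ≤ N m ω := hNge m ω
            have : nrm₂ (T (y m)) ω ≤ (q:ℝ) := le_trans hc hb
            exact absurd hq1 (not_lt.2 this)
          have h0 := measure_mono_ae hsub0
          rwa [measure_empty, le_zero_iff] at h0
        set E' : Set Ω := Eq \ Sm with hE'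
        have hE'meas : μ E' = μ Eq := by
          apply le_antisymm (measure_mono Set.diff_subset)
          calc μ Eq = μ ((Eq \ Sm) ∪ (Eq ∩ Sm)) := by rw [Set.diff_union_inter]
          _ ≤ μ (Eq \ Sm) + μ (Eq ∩ Sm) := measure_union_le _ _
          _ = μ E' := by rw [hnull, add_zero]
        have hdisj : Disjoint E' Sm :=
          Set.disjoint_right.2 fun ω hωS hωE' => hωE'.2 hωS
        have hcup : μ (E' ∪ Sm) = μ E' + μ Sm := measure_union hdisj hSmeas
        have hsubmax : (E' ∪ Sm : Set Ω) ≤ᵐ[μ]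
            ({ω | (q:ℝ) < nrm₂ (T z) ω} : Set Ω) := by
          filter_upwards [hzmax] with ω hmax
          intro hmem
          show (q:ℝ) < nrm₂ (T z) ω
          rw [hmax]
          rcases hmem with h | h
          · exact lt_max_of_lt_right h.1.2
          · exact lt_max_of_lt_left h
        have hfinal : (μ E').toReal + (μ Sm).toReal
            ≤ (μ {ω | (q:ℝ) < nrm₂ (T z) ω}).toReal := by
          rw [← ENNReal.toReal_add (measure_ne_top μ _) (measure_ne_top μ _), ← hcup]
          exact ENNReal.toReal_mono (measure_ne_top μ _) (measure_mono_ae hsubmax)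
        rw [hE'meas] at hfinal
        exact le_trans hfinal hzval
      have hk : ∀ k : ℕ, (μ Eq).toReal < 1/((k:ℝ)+1) := by
        intro k
        set m := e (q, k) with hm
        have hvm : v m = u (q, k) := by rw [hv]; simp [hm]
        have hq1 : Mq q - 1/((k:ℝ)+1) < val (v m) q := by
          rw [hvm]; exact hu2 (q, k)
        have hq2 : val (v m) q ≤ (μ {ω | (q:ℝ) < nrm₂ (T (y m)) ω}).toReal := by
          apply ENNReal.toReal_mono (measure_ne_top μ _)
          apply measure_mono_ae
          filter_upwards [hydom m] with ω hω hqq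
          exact lt_of_lt_of_le hqq hω
        have hq3 := hstep m
        linarith
      have h0 : (μ Eq).toReal ≤ 0 := by
        by_contra hpos
        push_neg at hpos
        obtain ⟨k, hk'⟩ := exists_nat_one_div_lt hpos
        exact absurd (hk k) (not_lt.2 hk'.le)
      have h1 := le_antisymm h0 ENNReal.toReal_nonneg
      rcases (ENNReal.toReal_eq_zero_iff _).1 h1 with h | h
      · exact h
      · exact absurd h (measure_ne_top μ _)
    have hae : ∀ᵐ ω ∂μ, ∀ q : ℚ,
        ¬(0 ≤ (q:ℝ) ∧ G ω ≤ ENNReal.ofReal (q:ℝ) ∧ (q:ℝ) < nrm₂ (T x) ω) := by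
      rw [ae_all_iff]
      intro q
      by_cases hq : 0 ≤ (q:ℝ)
      · have h0 := hEq q hq
        have hae1 := measure_eq_zero_iff_ae_notMem.1 h0
        filter_upwards [hae1] with ω hω
        rintro ⟨_, hb, hc⟩
        exact hω ⟨hb, hc⟩
      · exact Filter.Eventually.of_forall fun ω h => hq h.1
    filter_upwards [hae] with ω hω
    by_contra hlt
    push_neg at hlt
    have hGne : G ω ≠ ∞ := ne_top_of_lt hlt
    have htlt : (G ω).toReal < nrm₂ (T x) ω :=
      (ENNReal.lt_ofReal_iff_toReal_lt hGne).1 hlt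
    obtain ⟨q, hq1, hq2⟩ := exists_rat_btwn htlt
    have hq0 : 0 ≤ (q:ℝ) := le_trans ENNReal.toReal_nonneg hq1.le
    apply hω q
    refine ⟨hq0, ?_, hq2⟩
    rw [← ENNReal.ofReal_toReal hGne]
    exact ENNReal.ofReal_le_ofReal hq1.le
  set ξ : Ω →ₘ[μ] ℝ := AEEqFun.mk (fun ω => (G ω).toReal)
    hGmeas.ennreal_toReal.aestronglyMeasurable with hξdef
  have hξae : ⇑ξ =ᵐ[μ] fun ω => (G ω).toReal := AEEqFun.coeFn_mk _ _
  have hξ0 : 0 ≤ ξ := by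
    apply le_of_ae
    filter_upwards [hξae, AEEqFun.coeFn_zero (β := ℝ) (μ := μ)] with ω a b
    rw [a, b, Pi.zero_apply]
    exact ENNReal.toReal_nonneg
  refine ⟨ξ, hξ0, fun x => ?_⟩
  have hGaefin : ∀ᵐ ω ∂μ, G ω ≠ ∞ := by
    have h0 := measure_eq_zero_iff_ae_notMem.1 hGfin
    filter_upwards [h0] with ω h
    exact h
  have hbd : ∀ k : ℕ, ∀ᵐ ω ∂μ,
      nrm₂ (T x) ω ≤ ξ ω * nrm₁ x ω + ξ ω * (1/((k:ℝ)+1)) := by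
    intro k
    set δ : ℝ := 1/((k:ℝ)+1) with hδ
    have hδ0 : 0 < δ := by positivity
    have hcontinv : Continuous (fun r : ℝ => (max r 0 + δ)⁻¹) := by
      apply Continuous.inv₀ ((continuous_id.max continuous_const).add continuous_const)
      intro r
      have h0 : (0:ℝ) < max r 0 + δ := by positivity
      exact h0.ne'
    set inv : Ω →ₘ[μ] ℝ := (nrm₁ x).comp (fun r => (max r 0 + δ)⁻¹) hcontinv with hinv
    have hinv_ae : ∀ᵐ ω ∂μ, inv ω = (max (nrm₁ x ω) 0 + δ)⁻¹ :=
      AEEqFun.coeFn_comp _ _ _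
    set χ : Ω →ₘ[μ] K := l0ofReal K inv with hχ
    have hχabs : ∀ᵐ ω ∂μ, l0abs χ ω = (max (nrm₁ x ω) 0 + δ)⁻¹ := by
      filter_upwards [l0abs_ae χ,
        AEEqFun.coeFn_comp (fun r : ℝ => (RCLike.ofReal r : K))
          RCLike.continuous_ofReal inv, hinv_ae] with ω a b c
      rw [a]
      have hb : χ ω = ((inv ω : ℝ) : K) := b
      rw [hb, RCLike.norm_ofReal, c, abs_of_nonneg (by positivity)]
    set x' : S₁ := χ • x with hx'
    have hx'B : x' ∈ Bset := by
      show nrm₁ x' ≤ 1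
      rw [hx', h₁.smul_eq]
      apply le_of_ae
      filter_upwards [AEEqFun.coeFn_mul (l0abs χ) (nrm₁ x), hχabs,
        ae_nonneg (h₁.nonneg x), AEEqFun.coeFn_one (β := ℝ) (μ := μ)] with ω a b c d
      rw [a, Pi.mul_apply, b, d, Pi.one_apply, max_eq_left c]
      have hpos : 0 < nrm₁ x ω + δ := by linarith
      rw [← div_eq_inv_mul, div_le_one hpos]
      linarith
    have hdomx' := hdom x' hx'B
    have hnx' : nrm₂ (T x') = l0abs χ * nrm₂ (T x) := by
      rw [hx', hlin, h₂.smul_eq]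
    filter_upwards [hdomx', hχabs, hGaefin, hξae, ae_nonneg (h₁.nonneg x),
      ae_nonneg (h₂.nonneg (T x)), AEEqFun.coeFn_mul (l0abs χ) (nrm₂ (T x))]
      with ω a b c d e f g
    have hval' : nrm₂ (T x') ω = (max (nrm₁ x ω) 0 + δ)⁻¹ * nrm₂ (T x) ω := by
      rw [hnx', g, Pi.mul_apply, b]
    rw [hval'] at a
    have h2 : (max (nrm₁ x ω) 0 + δ)⁻¹ * nrm₂ (T x) ω ≤ (G ω).toReal := by
      rw [← ENNReal.ofReal_toReal c] at a
      exact (ENNReal.ofReal_le_ofReal_iff ENNReal.toReal_nonneg).1 a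
    rw [max_eq_left e] at h2
    have hpos : 0 < nrm₁ x ω + δ := by linarith
    rw [inv_mul_le_iff₀ hpos] at h2
    rw [d]
    have hξnn : (0:ℝ) ≤ (G ω).toReal := ENNReal.toReal_nonneg
    nlinarith [h2]
  apply le_of_ae
  filter_upwards [ae_all_iff.2 hbd, AEEqFun.coeFn_mul ξ (nrm₁ x), hξae]
    with ω hω hmul hξv
  rw [hmul, Pi.mul_apply]
  have hξnn : 0 ≤ ξ ω := by rw [hξv]; exact ENNReal.toReal_nonneg
  by_contra hc
  push_neg at hc
  set t := nrm₂ (T x) ω - ξ ω * nrm₁ x ω with ht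
  have ht0 : 0 < t := by simp only [ht]; linarith
  rcases eq_or_lt_of_le hξnn with hz | hz
  · have h0 := hω 0
    rw [← hz] at h0
    simp only [zero_mul, zero_add] at h0
    have hzz : ξ ω * nrm₁ x ω = 0 := by rw [← hz, zero_mul]
    rw [hzz] at hc
    linarith
  · obtain ⟨k, hk⟩ := exists_nat_one_div_lt (show 0 < t / ξ ω by positivity)
    have h0 := hω k
    have h1 : ξ ω * (1/((k:ℝ)+1)) < ξ ω * (t / ξ ω) := by
      apply mul_lt_mul_of_pos_left hk hz
    rw [mul_div_cancel₀ _ hz.ne'] at h1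
    simp only [ht] at h1
    linarith
  done

end Backward

end RNProofAux

/-- A linear operator `T` between `RN` modules `S¹`, `S²` is a.s. bounded
(there is `ξ ∈ L⁰₊` with `‖Tx‖₂ ≤ ξ‖x‖₁` for all `x`) iff `T` is a continuous module
homomorphism for the `(ε,λ)`-topologies. -/
theorem as_bounded_iff_continuous_module_hom
    {Ω : Type*} [MeasurableSpace Ω] (μ : Measure Ω) [IsProbabilityMeasure μ]
    (K : Type*) [RCLike K]
    {S₁ : Type*} [AddCommGroup S₁] [Module (Ω →ₘ[μ] K) S₁]
    {S₂ : Type*} [AddCommGroup S₂] [Module (Ω →ₘ[μ] K) S₂]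
    (nrm₁ : S₁ → Ω →ₘ[μ] ℝ) (nrm₂ : S₂ → Ω →ₘ[μ] ℝ)
    (h₁ : IsRNNorm K nrm₁) (h₂ : IsRNNorm K nrm₂)
    (T : S₁ → S₂)
    (hadd : ∀ x y, T (x + y) = T x + T y)
    (hsmulK : ∀ (c : K) (x), T ((AEEqFun.const Ω c : Ω →ₘ[μ] K) • x)
      = (AEEqFun.const Ω c : Ω →ₘ[μ] K) • T x) :
    (∃ ξ : Ω →ₘ[μ] ℝ, 0 ≤ ξ ∧ ∀ x, nrm₂ (T x) ≤ ξ * nrm₁ x) ↔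
      (@Continuous S₁ S₂ (elTop nrm₁) (elTop nrm₂) T ∧
        ∀ (ξ : Ω →ₘ[μ] K) (x), T (ξ • x) = ξ • T x) := by
  constructor
  · rintro ⟨ξ₀, hξ₀, hbd⟩
    exact ⟨RNProofAux.fwd_continuous h₁ h₂ hadd hξ₀ hbd,
      fun ξ x => RNProofAux.fwd_linear h₁ h₂ hadd hsmulK hξ₀ hbd ξ x⟩
  · rintro ⟨hcont, hlin⟩
    exact RNProofAux.bwd_bounded h₁ h₂ hadd hlin hcont
end
end

section
/- Let $\{T(t) : t \ge 0\}$ be an almost surely uniformly bounded $C_0$-semigroup on a complete $RN$ module $S$ with infinitesimal generator $(A, D(A))$. Then for every $x \in D(A)$, the supremum $\bigvee_{t>0} \|(T(t)x - x)/t\|$ belongs to $L^0_+(\mathcal{F})$. -/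
/- Preamble: random normed modules over `L⁰(𝓕,K)`, the `(ε,λ)`-topology,
`C₀`-semigroups of continuous module homomorphisms and resolvents. -/

open MeasureTheory MeasureTheory.AEEqFun Filter Set
noncomputable section

set_option linter.unusedSectionVars false

namespace RNTheoryAux

open RNTheory MeasureTheory MeasureTheory.AEEqFun Filter Set

variable {Ω : Type*} [MeasurableSpace Ω] {μ : Measure Ω} [IsProbabilityMeasure μ]
variable {K : Type*} [RCLike K] {S : Type*} [AddCommGroup S] [Module (Ω →ₘ[μ] K) S]

lemma l0_le_iff {f g : Ω →ₘ[μ] ℝ} : f ≤ g ↔ ∀ᵐ ω ∂μ, f ω ≤ g ω :=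
  AEEqFun.coeFn_le.symm

lemma rconst_coe (r : ℝ) : ∀ᵐ ω ∂μ, (rconst K μ r) ω = (RCLike.ofReal r : K) :=
  AEEqFun.coeFn_const Ω _

lemma l0abs_coe (ξ : Ω →ₘ[μ] K) : ∀ᵐ ω ∂μ, (l0abs ξ) ω = ‖ξ ω‖ :=
  AEEqFun.coeFn_comp _ _ _

lemma rconst_mul (a b : ℝ) :
    rconst K μ a * rconst K μ b = rconst K μ (a * b) := by
  apply AEEqFun.ext
  filter_upwards [AEEqFun.coeFn_mul (rconst K μ a) (rconst K μ b),
    rconst_coe (K := K) (μ := μ) a, rconst_coe (K := K) (μ := μ) b,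
    rconst_coe (K := K) (μ := μ) (a * b)] with ω h1 h2 h3 h4
  simp only [h1, Pi.mul_apply, h2, h3, h4, ← RCLike.ofReal_mul]

variable {nrm : S → Ω →ₘ[μ] ℝ} (h : IsRNNorm K nrm)
include h

lemma nrm_nonneg_ae (x : S) : ∀ᵐ ω ∂μ, 0 ≤ (nrm x) ω := by
  filter_upwards [l0_le_iff.1 (h.nonneg x), AEEqFun.coeFn_zero (μ := μ) (β := ℝ)] with ω h1 h2
  rw [h2] at h1; exact h1

lemma nrm_zero : nrm (0 : S) = 0 := by
  have h0 : ((0 : Ω →ₘ[μ] K) • (0 : S)) = (0 : S) := smul_zero _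
  have habs : l0abs (0 : Ω →ₘ[μ] K) = 0 := by
    apply AEEqFun.ext
    filter_upwards [l0abs_coe (μ := μ) (0 : Ω →ₘ[μ] K),
      AEEqFun.coeFn_zero (μ := μ) (β := K), AEEqFun.coeFn_zero (μ := μ) (β := ℝ)] with ω h1 h2 h3
    simp only [h1, h2, h3, Pi.zero_apply, norm_zero]
  have := h.smul_eq 0 (0 : S)
  rw [h0, habs, zero_mul] at this
  exact this

lemma nrm_zero_ae : ∀ᵐ ω ∂μ, (nrm (0 : S)) ω = 0 := by
  rw [nrm_zero h]
  exact AEEqFun.coeFn_zero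

lemma nrm_add_ae (x y : S) : ∀ᵐ ω ∂μ, (nrm (x + y)) ω ≤ (nrm x) ω + (nrm y) ω := by
  filter_upwards [l0_le_iff.1 (h.add_le x y), AEEqFun.coeFn_add (nrm x) (nrm y)] with ω h1 h2
  rw [h2] at h1; exact h1

lemma nrm_sub_triangle_ae (a b c : S) :
    ∀ᵐ ω ∂μ, (nrm (a - c)) ω ≤ (nrm (a - b)) ω + (nrm (b - c)) ω := by
  have : a - c = (a - b) + (b - c) := by abel
  rw [this]; exact nrm_add_ae h _ _

lemma nrm_rconst_smul_ae (r : ℝ) (x : S) :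
    ∀ᵐ ω ∂μ, (nrm (rconst K μ r • x)) ω = |r| * (nrm x) ω := by
  rw [h.smul_eq]
  filter_upwards [AEEqFun.coeFn_mul (l0abs (rconst K μ r)) (nrm x),
    l0abs_coe (μ := μ) (rconst K μ r), rconst_coe (K := K) (μ := μ) r] with ω h1 h2 h3
  rw [h1, Pi.mul_apply, h2, h3, RCLike.norm_ofReal]

lemma nrm_sum_ae (v : ℕ → S) (n : ℕ) :
    ∀ᵐ ω ∂μ, (nrm (∑ k ∈ Finset.range n, v k)) ω ≤ ∑ k ∈ Finset.range n, (nrm (v k)) ω := by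
  induction n with
  | zero =>
      simp only [Finset.range_zero, Finset.sum_empty]
      filter_upwards [nrm_zero_ae h] with ω h1
      rw [h1]
  | succ n ih =>
      simp only [Finset.sum_range_succ]
      filter_upwards [ih, nrm_add_ae h (∑ k ∈ Finset.range n, v k) (v n)] with ω h1 h2
      exact h2.trans (by linarith)

section Semigroup

variable (T : ℝ → S →ₗ[Ω →ₘ[μ] K] S) (hT : IsC0Semigroup K nrm T)
include hT

omit h in
lemma sum_T_telescope (s : ℝ) (hs : 0 ≤ s) (x : S) (n : ℕ) :
    ∑ k ∈ Finset.range n, (T ((k : ℝ) * s) (T s x) - T ((k : ℝ) * s) x)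
      = T ((n : ℝ) * s) x - x := by
  have key : ∀ k : ℕ, T ((k : ℝ) * s) (T s x) = T (((k + 1 : ℕ) : ℝ) * s) x := by
    intro k
    have hc := hT.comp_eq ((k : ℝ) * s) s (by positivity) hs
    have harg : ((k + 1 : ℕ) : ℝ) * s = (k : ℝ) * s + s := by push_cast; ring
    rw [harg, hc]
    rfl
  calc ∑ k ∈ Finset.range n, (T ((k : ℝ) * s) (T s x) - T ((k : ℝ) * s) x)
      = ∑ k ∈ Finset.range n,
          ((fun m : ℕ => T ((m : ℝ) * s) x) (k + 1) - (fun m : ℕ => T ((m : ℝ) * s) x) k) := by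
        refine Finset.sum_congr rfl fun k _ => ?_
        simp only [key k]
    _ = T (((n:ℕ) : ℝ) * s) x - T (((0:ℕ) : ℝ) * s) x := Finset.sum_range_sub (fun m : ℕ => T ((m : ℝ) * s) x) n
    _ = T ((n : ℝ) * s) x - x := by
        have h0 : (((0:ℕ) : ℝ)) * s = 0 := by norm_num
        rw [h0, hT.id_eq]
        rfl

omit h in
lemma key_identity (t : ℝ) (ht : 0 < t) (n : ℕ) (hn : 0 < n) (x : S) :
    rconst K μ t⁻¹ • (T t x - x)
      = rconst K μ ((n : ℝ))⁻¹ • ∑ k ∈ Finset.range n,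
          T ((k : ℝ) * (t / n)) (rconst K μ (t / n)⁻¹ • (T (t / n) x - x)) := by
  set s : ℝ := t / n with hs_def
  have hn' : (0 : ℝ) < n := Nat.cast_pos.mpr hn
  have hs : 0 ≤ s := by positivity
  have hsum : ∑ k ∈ Finset.range n, T ((k : ℝ) * s) (rconst K μ s⁻¹ • (T s x - x))
      = rconst K μ s⁻¹ • (T t x - x) := by
    calc ∑ k ∈ Finset.range n, T ((k : ℝ) * s) (rconst K μ s⁻¹ • (T s x - x))
        = ∑ k ∈ Finset.range n, rconst K μ s⁻¹ • (T ((k : ℝ) * s) (T s x) - T ((k : ℝ) * s) x) := by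
          refine Finset.sum_congr rfl fun k _ => ?_
          rw [LinearMap.map_smul, map_sub]
      _ = rconst K μ s⁻¹ • ∑ k ∈ Finset.range n,
            (T ((k : ℝ) * s) (T s x) - T ((k : ℝ) * s) x) :=
          (Finset.smul_sum (r := rconst K μ s⁻¹)
            (f := fun k : ℕ => T ((k : ℝ) * s) (T s x) - T ((k : ℝ) * s) x)
            (s := Finset.range n)).symm
      _ = rconst K μ s⁻¹ • (T ((n : ℝ) * s) x - x) := by rw [sum_T_telescope T hT s hs x n]
      _ = rconst K μ s⁻¹ • (T t x - x) := by
          congr 2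
          rw [hs_def]
          field_simp
  rw [hsum, smul_smul, rconst_mul]
  congr 1
  rw [hs_def]
  field_simp

lemma quotient_bound {ξ : Ω →ₘ[μ] ℝ} (hξ0 : 0 ≤ ξ)
    (hξ : ∀ t, 0 ≤ t → ∀ x, nrm (T t x) ≤ ξ * nrm x)
    (t : ℝ) (ht : 0 < t) (n : ℕ) (hn : 0 < n) (x : S) :
    ∀ᵐ ω ∂μ, (nrm (rconst K μ t⁻¹ • (T t x - x))) ω
      ≤ ξ ω * (nrm (rconst K μ (t / n)⁻¹ • (T (t / n) x - x))) ω := by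
  set s : ℝ := t / n with hs_def
  set u : S := rconst K μ s⁻¹ • (T s x - x) with hu_def
  set W : S := ∑ k ∈ Finset.range n, T ((k : ℝ) * s) u with hW_def
  have hn' : (0 : ℝ) < n := Nat.cast_pos.mpr hn
  have hkey := key_identity (K := K) T hT t ht n hn x
  have hbd : ∀ k : ℕ, ∀ᵐ ω ∂μ, (nrm (T ((k : ℝ) * s) u)) ω ≤ ξ ω * (nrm u) ω := by
    intro k
    have := l0_le_iff.1 (hξ ((k : ℝ) * s) (by positivity) u)
    filter_upwards [this, AEEqFun.coeFn_mul ξ (nrm u)] with ω h1 h2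
    rw [h2] at h1; exact h1
  have hball : ∀ᵐ ω ∂μ, ∀ k : ℕ, (nrm (T ((k : ℝ) * s) u)) ω ≤ ξ ω * (nrm u) ω :=
    ae_all_iff.2 hbd
  filter_upwards [nrm_rconst_smul_ae h ((n : ℝ))⁻¹ W, nrm_sum_ae h (fun k => T ((k : ℝ) * s) u) n,
    hball, nrm_nonneg_ae h u, l0_le_iff.1 hξ0, AEEqFun.coeFn_zero (μ := μ) (β := ℝ)]
      with ω h1 h2 h3 h4 h5 h6
  rw [hkey, ← hW_def, h1]
  have hsum_le : ∑ k ∈ Finset.range n, (nrm (T ((k : ℝ) * s) u)) ω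
      ≤ (n : ℝ) * (ξ ω * (nrm u) ω) := by
    calc ∑ k ∈ Finset.range n, (nrm (T ((k : ℝ) * s) u)) ω
        ≤ ∑ _k ∈ Finset.range n, ξ ω * (nrm u) ω := Finset.sum_le_sum fun k _ => h3 k
      _ = (n : ℝ) * (ξ ω * (nrm u) ω) := by rw [Finset.sum_const, Finset.card_range, nsmul_eq_mul]
  have habs : |((n : ℝ))⁻¹| = ((n : ℝ))⁻¹ := abs_of_nonneg (by positivity)
  rw [habs]
  calc ((n : ℝ))⁻¹ * (nrm W) ω ≤ ((n : ℝ))⁻¹ * ((n : ℝ) * (ξ ω * (nrm u) ω)) := by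
        apply mul_le_mul_of_nonneg_left (h2.trans hsum_le) (by positivity)
    _ = ξ ω * (nrm u) ω := by field_simp

end Semigroup

lemma nrm_set_measurable (v : S) (ε : ℝ) : MeasurableSet {ω | (nrm v) ω < ε} := by
  have : {ω | (nrm v) ω < ε} = (nrm v) ⁻¹' (Iio ε) := rfl
  rw [this]
  exact (nrm v).measurable measurableSet_Iio

omit h in
lemma toReal_union_inter {A B : Set Ω} (hB : MeasurableSet B) :
    (μ A).toReal + (μ B).toReal - 1 ≤ (μ (A ∩ B)).toReal := by
  have h1 : μ (A ∪ B) + μ (A ∩ B) = μ A + μ B := measure_union_add_inter A hB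
  have h2 : (μ (A ∪ B)).toReal + (μ (A ∩ B)).toReal = (μ A).toReal + (μ B).toReal := by
    rw [← ENNReal.toReal_add (measure_ne_top μ _) (measure_ne_top μ _),
      ← ENNReal.toReal_add (measure_ne_top μ _) (measure_ne_top μ _), h1]
  have h3 : (μ (A ∪ B)).toReal ≤ 1 := by
    have hle : μ (A ∪ B) ≤ 1 := by
      have := measure_mono (μ := μ) (subset_univ (A ∪ B))
      rwa [measure_univ] at this
    have := ENNReal.toReal_mono (by simp) hle
    simpa using this
  linarith

lemma nset_mem_nhds (y : S) {ε lam : ℝ} (hε : 0 < ε) (hl0 : 0 < lam) (hl1 : lam < 1) :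
    Nset nrm y ε lam ∈ @nhds S (elTop nrm) y := by
  letI : TopologicalSpace S := elTop nrm
  rw [mem_nhds_iff]
  refine ⟨{z | ∃ ε' lam' : ℝ, 0 < ε' ∧ ε' < ε ∧ 0 < lam' ∧ lam' < lam ∧ z ∈ Nset nrm y ε' lam'},
    ?_, ?_, ?_⟩
  · rintro z ⟨ε', lam', _, hε', _, hl', hz⟩
    exact Nset_mono nrm y hε'.le hl'.le hz
  · rintro z₀ ⟨ε', lam', hε'0, hε', hl'0, hl', hz₀⟩
    refine ⟨(ε - ε') / 2, by linarith, (lam - lam') / 2, by linarith, by linarith, ?_⟩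
    intro z hz
    refine ⟨ε' + (ε - ε') / 2, lam' + (lam - lam') / 2, by linarith, by linarith, by linarith,
      by linarith, ?_⟩
    have hsub : μ ({ω | (nrm (z - z₀)) ω < (ε - ε') / 2} ∩ {ω | (nrm (z₀ - y)) ω < ε'})
        ≤ μ {ω | (nrm (z - y)) ω < ε' + (ε - ε') / 2} := by
      apply measure_mono_ae
      filter_upwards [nrm_sub_triangle_ae h z z₀ y] with ω htri
      rintro ⟨h1, h2⟩
      simp only [mem_setOf_eq] at h1 h2
      show (nrm (z - y)) ω < ε' + (ε - ε') / 2
      linarith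
    have hIE := toReal_union_inter (μ := μ)
      (A := {ω | (nrm (z - z₀)) ω < (ε - ε') / 2}) (nrm_set_measurable h (z₀ - y) ε')
    have hmono := ENNReal.toReal_mono (measure_ne_top μ _) hsub
    have hz' : 1 - (lam - lam') / 2 < (μ {ω | (nrm (z - z₀)) ω < (ε - ε') / 2}).toReal := hz
    have hz₀' : 1 - lam' < (μ {ω | (nrm (z₀ - y)) ω < ε'}).toReal := hz₀
    show 1 - (lam' + (lam - lam') / 2) < (μ {ω | (nrm (z - y)) ω < ε' + (ε - ε') / 2}).toReal
    linarith
  · refine ⟨ε / 2, lam / 2, by linarith, by linarith, by linarith, by linarith, ?_⟩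
    show 1 - lam / 2 < (μ {ω | (nrm (y - y)) ω < ε / 2}).toReal
    have hone : μ {ω | (nrm (y - y)) ω < ε / 2} = 1 := by
      refine le_antisymm (by simpa using measure_mono (μ := μ) (subset_univ _)) ?_
      rw [← measure_univ (μ := μ)]
      apply measure_mono_ae
      rw [sub_self]
      filter_upwards [nrm_zero_ae h] with ω h0
      intro _
      show (nrm (0 : S)) ω < ε / 2
      rw [h0]
      linarith
    rw [hone]
    simp only [ENNReal.toReal_one]
    linarith

lemma compl_bound (v : S) {ε lam : ℝ}
    (hmem : 1 - lam < (μ {ω | (nrm v) ω < ε}).toReal) :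
    (μ {ω | ε ≤ (nrm v) ω}).toReal < lam := by
  have hA := nrm_set_measurable h v ε
  have h1 : μ {ω | (nrm v) ω < ε} + μ {ω | (nrm v) ω < ε}ᶜ = 1 := by
    rw [measure_add_measure_compl hA, measure_univ]
  have h2 : (μ {ω | (nrm v) ω < ε}).toReal + (μ {ω | (nrm v) ω < ε}ᶜ).toReal = 1 := by
    rw [← ENNReal.toReal_add (measure_ne_top μ _) (measure_ne_top μ _), h1, ENNReal.toReal_one]
  have hset : {ω | ε ≤ (nrm v) ω} = {ω | (nrm v) ω < ε}ᶜ := by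
    ext ω; simp [not_lt]
  rw [hset]
  linarith

end RNTheoryAux

open RNTheory
open RNTheoryAux

/-- Let `{T(t) : t ≥ 0}` be an a.s. uniformly bounded `C₀`-semigroup on a
complete `RN` module `S` with infinitesimal generator `(A, D(A))`. Then for every
`x ∈ D(A)`, `⋁_{t > 0} ‖(T(t)x - x)/t‖ ∈ L⁰₊(𝓕)`. -/
theorem asu_bounded_semigroup_difference_quotients_bounded
    {Ω : Type*} [MeasurableSpace Ω] (μ : Measure Ω) [IsProbabilityMeasure μ]
    (K : Type*) [RCLike K] {S : Type*} [AddCommGroup S] [Module (Ω →ₘ[μ] K) S]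
    (nrm : S → Ω →ₘ[μ] ℝ) (h : IsRNNorm K nrm) (hcomplete : IsCompleteRN nrm)
    (T : ℝ → S →ₗ[Ω →ₘ[μ] K] S) (hT : IsC0Semigroup K nrm T)
    (hasu : ∃ ξ : Ω →ₘ[μ] ℝ, 0 ≤ ξ ∧ ∀ t, 0 ≤ t → ∀ x, nrm (T t x) ≤ ξ * nrm x) :
    ∀ x y, GenRel K nrm T x y →
      ∃ η : Ω →ₘ[μ] ℝ, 0 ≤ η ∧ ∀ t : ℝ, 0 < t →
        nrm (rconst K μ t⁻¹ • (T t x - x)) ≤ η := by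
  intro x y hxy
  obtain ⟨ξ, hξ0, hξ⟩ := hasu
  have hξae : ∀ᵐ ω ∂μ, 0 ≤ ξ ω := by
    filter_upwards [l0_le_iff.1 hξ0, AEEqFun.coeFn_zero (μ := μ) (β := ℝ)] with ω h1 h2
    rw [h2] at h1; exact h1
  refine ⟨ξ * nrm y, ?_, ?_⟩
  · apply l0_le_iff.2
    filter_upwards [AEEqFun.coeFn_zero (μ := μ) (β := ℝ), AEEqFun.coeFn_mul ξ (nrm y), hξae,
      nrm_nonneg_ae h y] with ω h0 hm h1 h2
    rw [h0, hm]
    exact mul_nonneg h1 h2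
  · intro t ht
    set Z : S := rconst K μ t⁻¹ • (T t x - x) with hZ
    set u : ℕ → S :=
      fun n => rconst K μ (t / ((n + 1 : ℕ) : ℝ))⁻¹ • (T (t / ((n + 1 : ℕ) : ℝ)) x - x) with hu
    set c : ℕ → Ω →ₘ[μ] ℝ := fun n => nrm (u n - y) with hc
    have hseq : Tendsto (fun n : ℕ => t / ((n + 1 : ℕ) : ℝ)) atTop (nhdsWithin 0 (Ioi 0)) := by
      apply tendsto_nhdsWithin_of_tendsto_nhds_of_eventually_within
      · exact (tendsto_const_div_atTop_nhds_zero_nat t).comp (tendsto_add_atTop_nat 1)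
      · exact Eventually.of_forall fun n => div_pos ht (by positivity)
    have hconv : ∀ ε : ℝ, 0 < ε → ∀ lam : ℝ, 0 < lam → lam < 1 →
        ∃ n : ℕ, (μ {ω | ε ≤ (c n) ω}).toReal < lam := by
      intro ε hε lam hl0 hl1
      have hmem := hxy (nset_mem_nhds h y hε hl0 hl1)
      have hev : ∀ᶠ n in atTop,
          (fun s : ℝ => rconst K μ s⁻¹ • (T s x - x)) (t / ((n + 1 : ℕ) : ℝ))
            ∈ Nset nrm y ε lam := hseq hmem
      obtain ⟨n, hn⟩ := hev.exists
      refine ⟨n, compl_bound h (u n - y) ?_⟩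
      exact hn
    have hmaster : ∀ n : ℕ, ∀ᵐ ω ∂μ, (nrm Z) ω ≤ ξ ω * ((c n) ω + (nrm y) ω) := by
      intro n
      have hq := quotient_bound (h := h) T hT hξ0 hξ t ht (n + 1) (Nat.succ_pos n) x
      have htri : ∀ᵐ ω ∂μ, (nrm (u n)) ω ≤ (c n) ω + (nrm y) ω := by
        have h1 := nrm_add_ae h (u n - y) y
        rw [sub_add_cancel] at h1
        exact h1
      filter_upwards [hq, htri, hξae] with ω h1 h2 h3
      calc (nrm Z) ω ≤ ξ ω * (nrm (u n)) ω := h1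
        _ ≤ ξ ω * ((c n) ω + (nrm y) ω) := mul_le_mul_of_nonneg_left h2 h3
    have hM : ∀ lam : ℝ, 0 < lam → ∃ M : ℕ, (μ {ω | (M : ℝ) < ξ ω}).toReal < lam := by
      intro lam hlam
      have hmeas : ∀ M : ℕ, MeasurableSet {ω | (M : ℝ) < ξ ω} := by
        intro M
        have heq : {ω | (M : ℝ) < ξ ω} = ξ ⁻¹' (Ioi (M : ℝ)) := rfl
        rw [heq]
        exact ξ.measurable measurableSet_Ioi
      have hanti : Antitone (fun M : ℕ => {ω | (M : ℝ) < ξ ω}) := by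
        intro a b hab ω hω
        simp only [mem_setOf_eq] at hω ⊢
        have hcast : (a : ℝ) ≤ b := Nat.cast_le.2 hab
        linarith
      have hempty : ⋂ M : ℕ, {ω | (M : ℝ) < ξ ω} = (∅ : Set Ω) := by
        ext ω
        simp only [mem_iInter, mem_setOf_eq, mem_empty_iff_false, iff_false, not_forall, not_lt]
        exact exists_nat_ge (ξ ω)
      have htend := tendsto_measure_iInter_atTop (μ := μ)
        (fun M => (hmeas M).nullMeasurableSet) hanti ⟨0, measure_ne_top μ _⟩
      rw [hempty, measure_empty] at htend
      have hev2 := htend (Iio_mem_nhds (ENNReal.ofReal_pos.2 hlam))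
      obtain ⟨M, hM2⟩ := (htend.eventually (eventually_mem_set.2
        (Iio_mem_nhds (ENNReal.ofReal_pos.2 hlam)))).exists
      refine ⟨M, ?_⟩
      have h3 : (μ {ω | (M : ℝ) < ξ ω}).toReal < (ENNReal.ofReal lam).toReal :=
        (ENNReal.toReal_lt_toReal (measure_ne_top μ _) ENNReal.ofReal_ne_top).2 hM2
      rwa [ENNReal.toReal_ofReal hlam.le] at h3
    have hnull : ∀ δ : ℝ, 0 < δ → μ {ω | ξ ω * (nrm y) ω + δ ≤ (nrm Z) ω} = 0 := by
      intro δ hδ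
      set E := {ω | ξ ω * (nrm y) ω + δ ≤ (nrm Z) ω} with hE
      have hkey : ∀ lam : ℝ, 0 < lam → lam < 1 → (μ E).toReal ≤ lam := by
        intro lam hl0 hl1
        obtain ⟨M, hMlt⟩ := hM (lam / 2) (by linarith)
        obtain ⟨n, hnlt⟩ := hconv (δ / (M + 1)) (by positivity) (lam / 2)
          (by linarith) (by linarith)
        have hsubE : μ E ≤ μ ({ω | (M : ℝ) < ξ ω} ∪ {ω | δ / (M + 1) ≤ (c n) ω}) := by
          apply measure_mono_ae
          filter_upwards [hmaster n, nrm_nonneg_ae h (u n - y), hξae] with ω h1 h2 h3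
          intro hωE
          have hωE' : ξ ω * (nrm y) ω + δ ≤ (nrm Z) ω := hωE
          by_contra hcon
          have hcon' : ¬((M : ℝ) < ξ ω ∨ δ / (M + 1) ≤ (c n) ω) := hcon
          push_neg at hcon'
          obtain ⟨hA, hB⟩ := hcon'
          have h5 : δ ≤ ξ ω * (c n) ω := by nlinarith
          have hle : ξ ω * (c n) ω ≤ (M : ℝ) * (c n) ω := mul_le_mul_of_nonneg_right hA h2
          have h6 : (M : ℝ) * (c n) ω ≤ (M : ℝ) * (δ / (M + 1)) :=
            mul_le_mul_of_nonneg_left hB.le (Nat.cast_nonneg M)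
          have h7 : (M : ℝ) * (δ / (M + 1)) < δ := by
            rw [mul_div_assoc']
            rw [div_lt_iff₀ (by positivity)]
            nlinarith
          linarith
        have hμu : (μ ({ω | (M : ℝ) < ξ ω} ∪ {ω | δ / (M + 1) ≤ (c n) ω})).toReal
            ≤ (μ {ω | (M : ℝ) < ξ ω}).toReal + (μ {ω | δ / (M + 1) ≤ (c n) ω}).toReal := by
          have hle := measure_union_le (μ := μ) {ω | (M : ℝ) < ξ ω} {ω | δ / (M + 1) ≤ (c n) ω}
          have h2 := ENNReal.toReal_mono
            (ENNReal.add_ne_top.2 ⟨measure_ne_top μ _, measure_ne_top μ _⟩) hle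
          rwa [ENNReal.toReal_add (measure_ne_top μ _) (measure_ne_top μ _)] at h2
        have hmono := ENNReal.toReal_mono (measure_ne_top μ _) hsubE
        linarith
      have h0 : (μ E).toReal = 0 := by
        by_contra hne
        have hpos : 0 < (μ E).toReal := lt_of_le_of_ne ENNReal.toReal_nonneg (Ne.symm hne)
        have hlt := hkey (min ((μ E).toReal / 2) 2⁻¹) (lt_min (by linarith) (by norm_num))
          (lt_of_le_of_lt (min_le_right _ _) (by norm_num))
        have := min_le_left ((μ E).toReal / 2) 2⁻¹
        linarith
      rcases (ENNReal.toReal_eq_zero_iff _).1 h0 with h9 | h9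
      · exact h9
      · exact absurd h9 (measure_ne_top μ _)
    apply l0_le_iff.2
    have hae : ∀ᵐ ω ∂μ, ∀ m : ℕ, ¬(ξ ω * (nrm y) ω + 1 / ((m : ℝ) + 1) ≤ (nrm Z) ω) := by
      rw [ae_all_iff]
      intro m
      have hz := hnull (1 / ((m : ℝ) + 1)) (by positivity)
      exact measure_eq_zero_iff_ae_notMem.1 hz
    filter_upwards [hae, AEEqFun.coeFn_mul ξ (nrm y)] with ω h1 h2
    rw [h2]
    show (nrm Z) ω ≤ ξ ω * (nrm y) ω
    by_contra hcon
    push_neg at hcon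
    obtain ⟨m, hm⟩ := exists_nat_one_div_lt (sub_pos.2 hcon)
    exact h1 m (by push_cast at hm ⊢; linarith)
end
end

section
/- Let $\{T(t) : t \ge 0\}$ be an a.s. bounded $C_0$-semigroup on a complete $RN$ module $S$. Then there exist $M, \tau \in L^0_+(\mathcal{F})$ with $M \ge 1$ such that $\|T(t)\| \le M e^{\tau t}$ for all $t \ge 0$. -/
/- Preamble: random normed modules over `L⁰(𝓕,K)`, the `(ε,λ)`-topology,
`C₀`-semigroups of continuous module homomorphisms and resolvents. -/

open MeasureTheory MeasureTheory.AEEqFun Filter Set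
noncomputable section

open RNTheory

/-- If `{T(t) : t ≥ 0}` is an a.s. bounded `C₀`-semigroup on a complete
`RN` module `S`, then there exist `M, τ ∈ L⁰₊(𝓕)` with `M ≥ 1` such that
`‖T(t)‖ ≤ M e^{τ t}` for all `t ≥ 0`. -/
theorem as_bounded_semigroup_exponential_bound
    {Ω : Type*} [MeasurableSpace Ω] (μ : Measure Ω) [IsProbabilityMeasure μ]
    (K : Type*) [RCLike K] {S : Type*} [AddCommGroup S] [Module (Ω →ₘ[μ] K) S]
    (nrm : S → Ω →ₘ[μ] ℝ) (h : IsRNNorm K nrm) (hcomplete : IsCompleteRN nrm)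
    (T : ℝ → S →ₗ[Ω →ₘ[μ] K] S) (hT : IsC0Semigroup K nrm T)
    (hb : IsASBounded K nrm T) :
    ∃ M τ : Ω →ₘ[μ] ℝ, 0 ≤ M ∧ 0 ≤ τ ∧ 1 ≤ M ∧
      ∀ t, 0 ≤ t → ∀ x, nrm (T t x) ≤ (M * l0exp (AEEqFun.const Ω t * τ)) * nrm x := by
  classical
  obtain ⟨L, hL, ξ, hξ0, hξ⟩ := hb
  set M : Ω →ₘ[μ] ℝ := ξ ⊔ 1 with hMdef
  have hcont : Continuous (fun r : ℝ => L⁻¹ * (r - 1)) := by continuity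
  set τ : Ω →ₘ[μ] ℝ := M.comp (fun r : ℝ => L⁻¹ * (r - 1)) hcont with hτdef
  have hle : ∀ f g : Ω →ₘ[μ] ℝ, (∀ᵐ ω ∂μ, f ω ≤ g ω) → f ≤ g :=
    fun f g hfg => AEEqFun.coeFn_le.mp hfg
  have hae : ∀ f g : Ω →ₘ[μ] ℝ, f ≤ g → ∀ᵐ ω ∂μ, f ω ≤ g ω :=
    fun f g hfg => AEEqFun.coeFn_le.mpr hfg
  have hMae : ∀ᵐ ω ∂μ, M ω = max (ξ ω) 1 := by
    filter_upwards [AEEqFun.coeFn_sup ξ 1, AEEqFun.coeFn_one (β := ℝ) (μ := μ)] with ω h1 h2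
    rw [hMdef, h1, h2]; rfl
  have hM1ae : ∀ᵐ ω ∂μ, 1 ≤ M ω := by
    filter_upwards [hMae] with ω h1; rw [h1]; exact le_max_right _ _
  have hξMae : ∀ᵐ ω ∂μ, ξ ω ≤ M ω := by
    filter_upwards [hMae] with ω h1; rw [h1]; exact le_max_left _ _
  have hτae : ∀ᵐ ω ∂μ, τ ω = L⁻¹ * (M ω - 1) := by
    filter_upwards [AEEqFun.coeFn_comp (fun r : ℝ => L⁻¹ * (r - 1)) hcont M] with ω h1
    rw [hτdef, h1]; rfl
  have hx0 : ∀ x : S, ∀ᵐ ω ∂μ, 0 ≤ nrm x ω := by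
    intro x
    filter_upwards [hae 0 (nrm x) (h.nonneg x), AEEqFun.coeFn_zero (β := ℝ) (μ := μ)] with ω h1 h2
    rw [h2, Pi.zero_apply] at h1; exact h1
  -- the one-step bound on [0, L]
  have hstep : ∀ t ∈ Icc (0:ℝ) L, ∀ x : S, ∀ᵐ ω ∂μ, nrm (T t x) ω ≤ M ω * nrm x ω := by
    intro t ht x
    filter_upwards [hae _ _ (hξ t ht x), AEEqFun.coeFn_mul ξ (nrm x), hξMae, hx0 x]
      with ω h1 h2 h3 h4
    rw [h2, Pi.mul_apply] at h1
    exact h1.trans (mul_le_mul_of_nonneg_right h3 h4)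
  -- iterated bound
  have key : ∀ n : ℕ, ∀ t, t ∈ Icc (0:ℝ) ((n + 1) * L) → ∀ x : S,
      ∀ᵐ ω ∂μ, nrm (T t x) ω ≤ M ω ^ (n + 1) * nrm x ω := by
    intro n
    induction n with
    | zero =>
      intro t ht x
      filter_upwards [hstep t (by simpa using ht) x] with ω h1
      simpa using h1
    | succ n ih =>
      intro t ht x
      rcases le_or_gt t ((n + 1) * L) with hcase | hcase
      · filter_upwards [ih t ⟨ht.1, hcase⟩ x, hM1ae, hx0 x] with ω h1 h2 h3
        refine h1.trans (mul_le_mul_of_nonneg_right ?_ h3)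
        exact pow_le_pow_right₀ h2 (by omega)
      · have hL1 : L ≤ (n + 1 : ℝ) * L := by nlinarith
        have h0tL : 0 ≤ t - L := by linarith
        have htL : t - L ≤ (n + 1 : ℝ) * L := by
          have := ht.2; push_cast at this ⊢; nlinarith
        have hTt : T t x = T L (T (t - L) x) := by
          have hteq : L + (t - L) = t := by ring
          have hc := hT.comp_eq L (t - L) hL.le h0tL
          rw [hteq] at hc
          rw [hc, LinearMap.comp_apply]
        filter_upwards [hstep L ⟨hL.le, le_refl L⟩ (T (t - L) x),
          ih (t - L) ⟨h0tL, htL⟩ x, hM1ae] with ω h1 h2 h3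
        have hM0 : 0 ≤ M ω := by linarith
        rw [hTt]
        calc nrm (T L (T (t - L) x)) ω ≤ M ω * nrm (T (t - L) x) ω := h1
          _ ≤ M ω * (M ω ^ (n + 1) * nrm x ω) := mul_le_mul_of_nonneg_left h2 hM0
          _ = M ω ^ (n + 1 + 1) * nrm x ω := by ring
  refine ⟨M, τ, hle _ _ ?_, hle _ _ ?_, hle _ _ ?_, ?_⟩
  · filter_upwards [hM1ae, AEEqFun.coeFn_zero (β := ℝ) (μ := μ)] with ω h1 h2
    rw [h2, Pi.zero_apply]; linarith
  · filter_upwards [hτae, hM1ae, AEEqFun.coeFn_zero (β := ℝ) (μ := μ)] with ω h1 h2 h3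
    rw [h3, Pi.zero_apply, h1]
    have hL' : (0:ℝ) ≤ L⁻¹ := by positivity
    nlinarith
  · filter_upwards [hM1ae, AEEqFun.coeFn_one (β := ℝ) (μ := μ)] with ω h1 h2
    rw [h2, Pi.one_apply]; exact h1
  · intro t ht x
    set n : ℕ := ⌊t / L⌋₊ with hn
    have hnle : (n : ℝ) ≤ t / L := Nat.floor_le (by positivity)
    have hlt : t / L < n + 1 := Nat.lt_floor_add_one _
    have htub : t ≤ (n + 1 : ℝ) * L := le_of_lt ((div_lt_iff₀ hL).mp hlt)
    apply hle
    filter_upwards [key n t ⟨ht, htub⟩ x, hM1ae, hx0 x, hτae,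
      AEEqFun.coeFn_mul (M * l0exp (AEEqFun.const Ω t * τ)) (nrm x),
      AEEqFun.coeFn_mul M (l0exp (AEEqFun.const Ω t * τ)),
      AEEqFun.coeFn_comp Real.exp Real.continuous_exp (AEEqFun.const Ω t * τ),
      AEEqFun.coeFn_mul (AEEqFun.const Ω t) τ,
      AEEqFun.coeFn_const Ω (t : ℝ)] with ω h1 h2 h3 h4 e1 e2 e3 e4 e5
    have hexp : (l0exp (AEEqFun.const Ω t * τ)) ω
        = Real.exp (t * (L⁻¹ * (M ω - 1))) := by
      have e3' : (l0exp (AEEqFun.const Ω t * τ)) ω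
          = Real.exp ((AEEqFun.const Ω t * τ : Ω →ₘ[μ] ℝ) ω) := e3
      rw [e3', e4, Pi.mul_apply, e5, Function.const_apply, h4]
    rw [e1, Pi.mul_apply, e2, Pi.mul_apply, hexp]
    have hpow : M ω ^ n ≤ Real.exp (t * (L⁻¹ * (M ω - 1))) := by
      have hMexp : M ω ≤ Real.exp (M ω - 1) := by
        have := Real.add_one_le_exp (M ω - 1); linarith
      have h0M : (0:ℝ) ≤ M ω := by linarith
      calc M ω ^ n ≤ (Real.exp (M ω - 1)) ^ n := pow_le_pow_left₀ h0M hMexp n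
        _ = Real.exp ((n : ℝ) * (M ω - 1)) := (Real.exp_nat_mul _ n).symm
        _ ≤ Real.exp (t * (L⁻¹ * (M ω - 1))) := by
            apply Real.exp_le_exp.mpr
            have hM10 : (0:ℝ) ≤ M ω - 1 := by linarith
            calc (n : ℝ) * (M ω - 1) ≤ (t / L) * (M ω - 1) :=
                  mul_le_mul_of_nonneg_right hnle hM10
              _ = t * (L⁻¹ * (M ω - 1)) := by ring
    calc nrm (T t x) ω ≤ M ω ^ (n + 1) * nrm x ω := h1
      _ = (M ω * M ω ^ n) * nrm x ω := by ring
      _ ≤ (M ω * Real.exp (t * (L⁻¹ * (M ω - 1)))) * nrm x ω := by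
          apply mul_le_mul_of_nonneg_right _ h3
          exact mul_le_mul_of_nonneg_left hpow (by linarith)
end
end

section
/- Let $\{T(t) : t \ge 0\}$ be an a.s. bounded $C_0$-semigroup on a complete $RN$ module $S$ with generator $(A, D(A))$. For each $x \in D(A)$, the orbit map $f(t) = T(t)x$ is $L^0$-Lipschitz on every finite interval $[0,r]$. -/
/- Preamble: random normed modules over `L⁰(𝓕,K)`, the `(ε,λ)`-topology,
`C₀`-semigroups of continuous module homomorphisms and resolvents. -/

open MeasureTheory MeasureTheory.AEEqFun Filter Set
noncomputable section

open RNTheory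

set_option linter.unusedSectionVars false

namespace RNTheory

section Aux

variable {Ω : Type*} [MeasurableSpace Ω] {μ : Measure Ω} [IsProbabilityMeasure μ]

local notation "L" => Ω →ₘ[μ] ℝ

lemma aux_le_iff {f g : L} : f ≤ g ↔ ∀ᵐ ω ∂μ, f ω ≤ g ω := AEEqFun.coeFn_le.symm

lemma aux_nullmeas_lt (f : L) (c : ℝ) : NullMeasurableSet {ω | f ω < c} μ :=
  f.aemeasurable.nullMeasurable (measurableSet_Iio (a := c))

lemma aux_nullmeas_gt (f : L) (c : ℝ) : NullMeasurableSet {ω | c < f ω} μ :=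
  f.aemeasurable.nullMeasurable (measurableSet_Ioi (a := c))

lemma aux_compl_toReal {s : Set Ω} (hs : NullMeasurableSet s μ) :
    (μ s).toReal + (μ sᶜ).toReal = 1 := by
  rw [← ENNReal.toReal_add (measure_ne_top μ s) (measure_ne_top μ sᶜ),
    measure_add_measure_compl₀ hs]
  simp

lemma aux_const_coe (c : ℝ) : ∀ᵐ ω ∂μ, (AEEqFun.const Ω c : L) ω = c := by
  filter_upwards [AEEqFun.coeFn_const Ω (μ := μ) c] with ω h using h

lemma aux_mul_coe (f g : L) : ∀ᵐ ω ∂μ, (f * g) ω = f ω * g ω := by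
  filter_upwards [AEEqFun.coeFn_mul f g] with ω h using h

lemma aux_add_coe (f g : L) : ∀ᵐ ω ∂μ, (f + g) ω = f ω + g ω := by
  filter_upwards [AEEqFun.coeFn_add f g] with ω h using h

lemma aux_sub_coe (f g : L) : ∀ᵐ ω ∂μ, (f - g) ω = f ω - g ω := by
  filter_upwards [AEEqFun.coeFn_sub f g] with ω h using h

lemma aux_pow_coe (f : L) (n : ℕ) : ∀ᵐ ω ∂μ, (f ^ n) ω = (f ω) ^ n := by
  filter_upwards [AEEqFun.coeFn_pow f n] with ω h using h

lemma aux_zero_coe : ∀ᵐ ω ∂μ, (0 : L) ω = 0 := by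
  filter_upwards [AEEqFun.coeFn_zero (μ := μ) (β := ℝ)] with ω h using h

lemma aux_one_coe : ∀ᵐ ω ∂μ, (1 : L) ω = 1 := by
  filter_upwards [AEEqFun.coeFn_one (μ := μ) (β := ℝ)] with ω h using h

lemma aux_const_zero : (AEEqFun.const Ω (0:ℝ) : L) = 0 := by
  apply AEEqFun.ext
  filter_upwards [AEEqFun.coeFn_const Ω (μ := μ) (0:ℝ),
    AEEqFun.coeFn_zero (μ := μ) (β := ℝ)] with ω h1 h2
  rw [h1, h2]; rfl

variable (K : Type*) [RCLike K]

lemma aux_rconst_mul (a b : ℝ) :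
    rconst K μ a * rconst K μ b = rconst K μ (a * b) := by
  apply AEEqFun.ext
  filter_upwards [AEEqFun.coeFn_mul (rconst K μ a) (rconst K μ b),
    AEEqFun.coeFn_const Ω (μ := μ) ((a : K)), AEEqFun.coeFn_const Ω (μ := μ) ((b : K)),
    AEEqFun.coeFn_const Ω (μ := μ) (((a * b : ℝ) : K))] with ω h1 h2 h3 h4
  simp only [rconst] at *
  rw [h4, h1, Pi.mul_apply, h2, h3]
  simp only [Function.const_apply]
  push_cast
  ring

lemma aux_rconst_one : rconst K μ 1 = 1 := by
  apply AEEqFun.ext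
  filter_upwards [AEEqFun.coeFn_const Ω (μ := μ) ((1:ℝ) : K),
    AEEqFun.coeFn_one (μ := μ) (β := K)] with ω h1 h2
  simp only [rconst] at *
  rw [h1, h2]
  simp

lemma aux_l0abs_rconst (c : ℝ) :
    l0abs (rconst K μ c) = AEEqFun.const Ω |c| := by
  apply AEEqFun.ext
  filter_upwards [AEEqFun.coeFn_comp (fun a : K => ‖a‖) continuous_norm (rconst K μ c),
    AEEqFun.coeFn_const Ω (μ := μ) ((c : K)), AEEqFun.coeFn_const Ω (μ := μ) |c|]
    with ω h1 h2 h3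
  simp only [l0abs, rconst] at *
  rw [h1, h3, Function.comp_apply, h2]
  simp [RCLike.norm_ofReal]

lemma aux_l0abs_coe (ξ : Ω →ₘ[μ] K) : ∀ᵐ ω ∂μ, (l0abs ξ) ω = ‖ξ ω‖ := by
  filter_upwards [AEEqFun.coeFn_comp (fun a : K => ‖a‖) continuous_norm ξ] with ω h using h

variable {S : Type*} [AddCommGroup S] [Module (Ω →ₘ[μ] K) S]
variable {nrm : S → Ω →ₘ[μ] ℝ}

lemma aux_nrm_zero (h : IsRNNorm K nrm) : nrm (0 : S) = 0 := by
  have h0 : (0 : S) = (0 : Ω →ₘ[μ] K) • (0 : S) := (smul_zero (0 : Ω →ₘ[μ] K)).symm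
  have habs : l0abs (0 : Ω →ₘ[μ] K) = 0 := by
    apply AEEqFun.ext
    filter_upwards [aux_l0abs_coe K (0 : Ω →ₘ[μ] K),
      AEEqFun.coeFn_zero (μ := μ) (β := K), AEEqFun.coeFn_zero (μ := μ) (β := ℝ)]
      with ω h1 h2 h3
    rw [h1, h2, h3]
    simp
  calc nrm (0 : S) = nrm ((0 : Ω →ₘ[μ] K) • (0 : S)) := by rw [← h0]
    _ = l0abs (0 : Ω →ₘ[μ] K) * nrm (0 : S) := h.smul_eq _ _
    _ = 0 := by rw [habs, zero_mul]

lemma aux_nrm_neg (h : IsRNNorm K nrm) (z : S) : nrm (-z) = nrm z := by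
  have h0 : (-z : S) = (-1 : Ω →ₘ[μ] K) • z := (neg_one_smul _ _).symm
  have habs : l0abs (-1 : Ω →ₘ[μ] K) = 1 := by
    apply AEEqFun.ext
    filter_upwards [aux_l0abs_coe K (-1 : Ω →ₘ[μ] K),
      AEEqFun.coeFn_neg (μ := μ) (1 : Ω →ₘ[μ] K),
      AEEqFun.coeFn_one (μ := μ) (β := K), AEEqFun.coeFn_one (μ := μ) (β := ℝ)]
      with ω h1 h2 h3 h4
    rw [h1, h2, Pi.neg_apply, h3, h4]
    simp
  rw [h0, h.smul_eq, habs, one_mul]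

end Aux

end RNTheory
namespace RNTheory

section Aux2

variable {Ω : Type*} [MeasurableSpace Ω] {μ : Measure Ω} [IsProbabilityMeasure μ]
variable (K : Type*) [RCLike K]
variable {S : Type*} [AddCommGroup S] [Module (Ω →ₘ[μ] K) S]
variable {nrm : S → Ω →ₘ[μ] ℝ}

lemma aux_nset_open (h : IsRNNorm K nrm) (y : S) {ε lam : ℝ}
    (hε : 0 < ε) (hlam0 : 0 < lam) :
    (elTop nrm).IsOpen (Nset nrm y ε lam) := by
  intro z hz
  set F := nrm (z - y) with hF
  set U := {ω | F ω < ε} with hU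
  have hzU : 1 - lam < (μ U).toReal := hz
  -- approximate from inside
  set A : ℕ → Set Ω := fun n => {ω | F ω < ε - 1 / (n + 1)} with hA
  have hmono : Monotone A := by
    intro m n hmn ω hω
    have h1 : (1 : ℝ) / (n + 1) ≤ 1 / (m + 1) := by
      apply one_div_le_one_div_of_le (by positivity)
      exact_mod_cast by omega
    simp only [hA, Set.mem_setOf_eq] at hω ⊢
    linarith
  have hUnion : ⋃ n, A n = U := by
    ext ω
    simp only [hA, hU, Set.mem_iUnion, Set.mem_setOf_eq]
    constructor
    · rintro ⟨n, hn⟩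
      have : (0:ℝ) < 1 / (n + 1) := by positivity
      linarith
    · intro hω
      obtain ⟨n, hn⟩ := exists_nat_one_div_lt (ε := ε - F ω) (by linarith)
      exact ⟨n, by push_cast at hn ⊢; linarith⟩
  have htends : Tendsto (fun n => (μ (A n)).toReal) atTop (nhds (μ U).toReal) := by
    have h1 := tendsto_measure_iUnion_atTop (μ := μ) hmono
    rw [hUnion] at h1
    exact (ENNReal.tendsto_toReal (measure_ne_top μ U)).comp h1
  set θ := ((μ U).toReal - (1 - lam)) / 2 with hθ
  have hθpos : 0 < θ := by simp only [hθ]; linarith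
  obtain ⟨n, hn⟩ := (htends.eventually (eventually_gt_nhds
    (show 1 - lam + θ < (μ U).toReal by simp only [hθ]; linarith))).exists
  set θ' := min θ (1/2) with hθ'
  have hθ'pos : 0 < θ' := lt_min hθpos (by norm_num)
  have hθ'le : θ' ≤ θ := min_le_left _ _
  refine ⟨1 / (n + 1), by positivity, θ', hθ'pos, ?_, ?_⟩
  · exact lt_of_le_of_lt (min_le_right _ _) (by norm_num)
  · intro w hw
    have hwz : 1 - θ < (μ {ω | (nrm (w - z)) ω < 1 / (n + 1)}).toReal :=
      lt_of_le_of_lt (by linarith) hw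
    set G := nrm (w - z) with hG
    set Bg := {ω | G ω < 1 / (n + 1)} with hBg
    -- triangle inequality a.e.
    have htri : ∀ᵐ ω ∂μ, (nrm (w - y)) ω ≤ G ω + F ω := by
      have h1 : nrm (w - y) ≤ G + F := by
        have := h.add_le (w - z) (z - y)
        rwa [sub_add_sub_cancel] at this
      filter_upwards [aux_le_iff.mp h1, aux_add_coe G F] with ω h1 h2
      rw [← h2]; exact h1
    set T := {ω | (nrm (w - y)) ω ≤ G ω + F ω} with hT
    have hTc : μ Tᶜ = 0 := by
      rw [Set.compl_setOf]
      exact htri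
    -- inclusion of complements
    have hsub : {ω | (nrm (w - y)) ω < ε}ᶜ ⊆ (A n)ᶜ ∪ Bgᶜ ∪ Tᶜ := by
      intro ω hω
      simp only [Set.mem_compl_iff, Set.mem_setOf_eq, not_lt] at hω
      by_contra hcon
      simp only [Set.mem_union, Set.mem_compl_iff, hA, hBg, hT, Set.mem_setOf_eq,
        not_or, not_not] at hcon
      obtain ⟨⟨h1, h2⟩, h3⟩ := hcon
      linarith
    have hcompl : (μ {ω | (nrm (w - y)) ω < ε}ᶜ).toReal ≤
        (μ (A n)ᶜ).toReal + (μ Bgᶜ).toReal := by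
      have h1 : μ {ω | (nrm (w - y)) ω < ε}ᶜ ≤ μ (A n)ᶜ + μ Bgᶜ := by
        calc μ {ω | (nrm (w - y)) ω < ε}ᶜ ≤ μ ((A n)ᶜ ∪ Bgᶜ ∪ Tᶜ) := measure_mono hsub
          _ ≤ μ ((A n)ᶜ ∪ Bgᶜ) + μ Tᶜ := measure_union_le _ _
          _ = μ ((A n)ᶜ ∪ Bgᶜ) := by rw [hTc, add_zero]
          _ ≤ μ (A n)ᶜ + μ Bgᶜ := measure_union_le _ _
      calc (μ {ω | (nrm (w - y)) ω < ε}ᶜ).toReal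
          ≤ (μ (A n)ᶜ + μ Bgᶜ).toReal := ENNReal.toReal_mono
            (by finiteness) h1
        _ = (μ (A n)ᶜ).toReal + (μ Bgᶜ).toReal :=
            ENNReal.toReal_add (measure_ne_top μ _) (measure_ne_top μ _)
    have e1 := aux_compl_toReal (aux_nullmeas_lt (nrm (w - y)) ε)
    have e2 := aux_compl_toReal (aux_nullmeas_lt F (ε - 1 / (n + 1)))
    have e3 := aux_compl_toReal (aux_nullmeas_lt G (1 / (n + 1)))
    have : 1 - lam < (μ {ω | (nrm (w - y)) ω < ε}).toReal := by
      have hAn : 1 - lam + θ < (μ (A n)).toReal := hn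
      simp only [hA, Set.mem_setOf_eq] at hAn e2
      linarith
    exact this

lemma aux_nset_mem_nhds (h : IsRNNorm K nrm) (y : S) {ε lam : ℝ}
    (hε : 0 < ε) (hlam0 : 0 < lam) :
    Nset nrm y ε lam ∈ @nhds S (elTop nrm) y := by
  letI : TopologicalSpace S := elTop nrm
  have hopen : IsOpen (Nset nrm y ε lam) := aux_nset_open K h y hε hlam0
  refine hopen.mem_nhds ?_
  show 1 - lam < (μ {ω | (nrm (y - y)) ω < ε}).toReal
  have h0 : μ {ω | (nrm (y - y)) ω < ε}ᶜ = 0 := by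
    have : nrm (y - y) = 0 := by rw [sub_self]; exact aux_nrm_zero K h
    rw [this, Set.compl_setOf]
    have := aux_zero_coe (μ := μ)
    rw [← MeasureTheory.ae_iff (p := fun ω => (0 : Ω →ₘ[μ] ℝ) ω < ε)]
    filter_upwards [this] with ω hω
    rw [hω]; exact hε
  have := aux_compl_toReal (aux_nullmeas_lt (nrm (y - y)) ε)
  rw [h0] at this
  simp only [ENNReal.toReal_zero] at this
  have hle : (μ {ω | (nrm (y - y)) ω < ε}).toReal = 1 := by linarith
  rw [hle]; linarith

/-- convergence in the (ε,λ)-topology implies convergence in probability -/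
lemma aux_tendsto_prob (h : IsRNNorm K nrm) {ι : Type*} {l : Filter ι} {v : ι → S} {y : S}
    (hv : Tendsto v l (@nhds S (elTop nrm) y)) {ε lam : ℝ} (hε : 0 < ε) (hlam : 0 < lam) :
    ∀ᶠ i in l, (μ {ω | ε ≤ (nrm (v i - y)) ω}).toReal < lam := by
  have hmem := aux_nset_mem_nhds K h y hε hlam
  filter_upwards [hv hmem] with i hi
  have h1 : 1 - lam < (μ {ω | (nrm (v i - y)) ω < ε}).toReal := hi
  have h2 := aux_compl_toReal (aux_nullmeas_lt (nrm (v i - y)) ε)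
  have h3 : {ω | ε ≤ (nrm (v i - y)) ω} = {ω | (nrm (v i - y)) ω < ε}ᶜ := by
    ext ω; simp [not_lt]
  rw [h3]
  linarith

end Aux2

end RNTheory
namespace RNTheory

section Aux3

variable {Ω : Type*} [MeasurableSpace Ω] {μ : Measure Ω} [IsProbabilityMeasure μ]

local notation "L" => Ω →ₘ[μ] ℝ

/-- If `b ≤ c * aₙ` with `c, aₙ ≥ 0` and `aₙ → 0` in probability, then `b ≤ 0`. -/
lemma aux_le_zero_of_prob {b c : L} {a : ℕ → L} (hc : (0:L) ≤ c) (ha : ∀ n, (0:L) ≤ a n)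
    (hba : ∀ n, b ≤ c * a n)
    (hconv : ∀ ε > (0:ℝ), ∀ lam > (0:ℝ), ∃ n, (μ {ω | ε ≤ (a n) ω}).toReal < lam) :
    b ≤ 0 := by
  -- step 1 : for every ε > 0 the set {b > ε} is null
  have step1 : ∀ ε > (0:ℝ), μ {ω | ε < b ω} = 0 := by
    intro ε hε
    -- choose a measurable representative of c to control its tails
    have hcM : Tendsto (fun M : ℕ => μ {ω | (M:ℝ) < c ω}) atTop (nhds 0) := by
      have hanti : Antitone (fun M : ℕ => {ω | (M:ℝ) < c ω}) := by
        intro m n hmn ω hω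
        simp only [Set.mem_setOf_eq] at hω ⊢
        have : (m:ℝ) ≤ n := by exact_mod_cast hmn
        linarith
      have hempty : ⋂ M : ℕ, {ω | (M:ℝ) < c ω} = ∅ := by
        ext ω
        simp only [Set.mem_iInter, Set.mem_setOf_eq, Set.mem_empty_iff_false, iff_false,
          not_forall, not_lt]
        obtain ⟨M, hM⟩ := exists_nat_gt (c ω)
        exact ⟨M, hM.le⟩
      have h1 := tendsto_measure_iInter_atTop (μ := μ) (s := fun M : ℕ => {ω | (M:ℝ) < c ω})
        (fun M => aux_nullmeas_gt c (M:ℝ)) hanti ⟨0, measure_ne_top μ _⟩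
      rw [hempty] at h1
      simpa [Function.comp_def] using h1
    -- measure of {b > ε} is smaller than every positive real
    have key : ∀ lam > (0:ℝ), (μ {ω | ε < b ω}).toReal < lam := by
      intro lam hlam
      have hcM' : Tendsto (fun M : ℕ => (μ {ω | (M:ℝ) < c ω}).toReal) atTop (nhds 0) := by
        have := (ENNReal.tendsto_toReal (a := 0) (by simp)).comp hcM
        simpa [Function.comp_def] using this
      obtain ⟨M, hM⟩ := (hcM'.eventually (eventually_lt_nhds (show (0:ℝ) < lam/2 by linarith))).exists
      obtain ⟨n, hn⟩ := hconv (ε / (M + 1)) (by positivity) (lam / 2) (by linarith)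
      -- a.e. facts
      have hae : ∀ᵐ ω ∂μ, b ω ≤ c ω * (a n) ω ∧ 0 ≤ c ω ∧ 0 ≤ (a n) ω := by
        filter_upwards [aux_le_iff.mp (hba n), aux_mul_coe c (a n),
          aux_le_iff.mp hc, aux_le_iff.mp (ha n), aux_zero_coe] with ω h1 h2 h3 h4 h5
        rw [h2] at h1
        rw [h5] at h3 h4
        exact ⟨h1, h3, h4⟩
      set N := {ω | ¬ (b ω ≤ c ω * (a n) ω ∧ 0 ≤ c ω ∧ 0 ≤ (a n) ω)} with hN
      have hNnull : μ N = 0 := hae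
      have hsub : {ω | ε < b ω} ⊆ {ω | (M:ℝ) < c ω} ∪ {ω | ε / (M + 1) ≤ (a n) ω} ∪ N := by
        intro ω hω
        simp only [Set.mem_setOf_eq] at hω
        by_contra hcon
        simp only [Set.mem_union, Set.mem_setOf_eq, hN, not_or, not_lt, not_le, not_not] at hcon
        obtain ⟨⟨h1, h2⟩, h3⟩ := hcon
        obtain ⟨hb1, hc1, ha1⟩ := h3
        have hM0 : (0:ℝ) ≤ M := Nat.cast_nonneg M
        have : c ω * (a n) ω ≤ (M:ℝ) * (a n) ω := mul_le_mul_of_nonneg_right h1 ha1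
        have h4 : (M:ℝ) * (a n) ω < (M:ℝ) * (ε / (M + 1)) ∨ (M:ℝ) * (a n) ω = 0 := by
          rcases eq_or_lt_of_le hM0 with h | h
          · right; rw [← h]; ring
          · left; exact (mul_lt_mul_iff_right₀ h).mpr h2
        have h5 : (M:ℝ) * (ε / (M + 1)) < ε := by
          rw [mul_div_assoc']
          rw [div_lt_iff₀ (by positivity)]
          nlinarith
        rcases h4 with h4 | h4 <;> nlinarith
      have hmeas : μ {ω | ε < b ω} ≤ μ {ω | (M:ℝ) < c ω} + μ {ω | ε / (M + 1) ≤ (a n) ω} := by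
        calc μ {ω | ε < b ω} ≤ μ ({ω | (M:ℝ) < c ω} ∪ {ω | ε / (M + 1) ≤ (a n) ω} ∪ N) :=
              measure_mono hsub
          _ ≤ μ ({ω | (M:ℝ) < c ω} ∪ {ω | ε / (M + 1) ≤ (a n) ω}) + μ N := measure_union_le _ _
          _ = μ ({ω | (M:ℝ) < c ω} ∪ {ω | ε / (M + 1) ≤ (a n) ω}) := by rw [hNnull, add_zero]
          _ ≤ _ := measure_union_le _ _
      have := ENNReal.toReal_mono (by finiteness) hmeas
      rw [ENNReal.toReal_add (measure_ne_top μ _) (measure_ne_top μ _)] at this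
      linarith
    have h0 : (μ {ω | ε < b ω}).toReal = 0 := by
      by_contra hcon
      have hpos : 0 < (μ {ω | ε < b ω}).toReal :=
        lt_of_le_of_ne ENNReal.toReal_nonneg (Ne.symm hcon)
      exact absurd (key _ hpos) (lt_irrefl _)
    exact (ENNReal.toReal_eq_zero_iff _).mp h0 |>.resolve_right (measure_ne_top μ _)
  -- step 2
  have hunion : {ω | 0 < b ω} = ⋃ k : ℕ, {ω | 1 / (k + 1 : ℝ) < b ω} := by
    ext ω
    simp only [Set.mem_setOf_eq, Set.mem_iUnion]
    constructor
    · intro hω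
      obtain ⟨k, hk⟩ := exists_nat_one_div_lt (ε := b ω) hω
      exact ⟨k, by exact_mod_cast hk⟩
    · rintro ⟨k, hk⟩
      have : (0:ℝ) < 1 / (k + 1 : ℝ) := by positivity
      linarith
  have hnull : μ {ω | 0 < b ω} = 0 := by
    rw [hunion]
    refine measure_iUnion_null fun k => step1 _ (by positivity)
  rw [aux_le_iff]
  filter_upwards [(MeasureTheory.ae_iff (p := fun ω => b ω ≤ 0)).mpr
    (by simpa only [not_le] using hnull), aux_zero_coe] with ω h1 h2
  rw [h2]; exact h1

end Aux3

end RNTheory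
namespace RNTheory

section Aux4

variable {Ω : Type*} [MeasurableSpace Ω] {μ : Measure Ω} [IsProbabilityMeasure μ]
variable (K : Type*) [RCLike K]
variable {S : Type*} [AddCommGroup S] [Module (Ω →ₘ[μ] K) S]
variable {nrm : S → Ω →ₘ[μ] ℝ} {T : ℝ → S →ₗ[Ω →ₘ[μ] K] S}

lemma aux_growth (h : IsRNNorm K nrm) (hT : IsC0Semigroup K nrm T)
    (hb : IsASBounded K nrm T) (r : ℝ) :
    ∃ η : Ω →ₘ[μ] ℝ, 0 ≤ η ∧ ∀ t ∈ Icc (0:ℝ) r, ∀ z, nrm (T t z) ≤ η * nrm z := by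
  obtain ⟨Lc, hLc, ξ₀, hξ₀, hbnd⟩ := hb
  set ζ := ξ₀ + 1 with hζ
  have hζω : ∀ᵐ ω ∂μ, ζ ω = ξ₀ ω + 1 ∧ 0 ≤ ξ₀ ω := by
    filter_upwards [aux_add_coe ξ₀ 1, aux_one_coe, aux_le_iff.mp hξ₀, aux_zero_coe]
      with ω h1 h2 h3 h4
    rw [h4] at h3
    exact ⟨by rw [h1, h2], h3⟩
  have claim : ∀ n : ℕ, ∀ t ∈ Icc (0:ℝ) (Lc * (n + 1)), ∀ z,
      nrm (T t z) ≤ ζ ^ (n + 1) * nrm z := by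
    intro n
    induction n with
    | zero =>
      intro t ht z
      have h1 := hbnd t ⟨ht.1, by have := ht.2; push_cast at this; linarith⟩ z
      rw [aux_le_iff]
      filter_upwards [aux_le_iff.mp h1, aux_mul_coe ξ₀ (nrm z),
        aux_mul_coe (ζ ^ (0 + 1)) (nrm z), aux_pow_coe ζ (0 + 1), hζω,
        aux_le_iff.mp (h.nonneg z), aux_zero_coe]
        with ω h1 h2 h3 h4 h5 h6 h7
      rw [h3, h4]
      rw [h2] at h1
      rw [h7] at h6
      rw [pow_one, h5.1]
      nlinarith [h5.2]
    | succ n ih =>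
      intro t ht z
      by_cases hle : t ≤ Lc * (n + 1)
      · have h1 := ih t ⟨ht.1, hle⟩ z
        rw [aux_le_iff]
        filter_upwards [aux_le_iff.mp h1, aux_mul_coe (ζ ^ (n + 1)) (nrm z),
          aux_mul_coe (ζ ^ (n + 1 + 1)) (nrm z), aux_pow_coe ζ (n + 1),
          aux_pow_coe ζ (n + 1 + 1), hζω, aux_le_iff.mp (h.nonneg z), aux_zero_coe]
          with ω h1 h2 h3 h4 h5 h6 h7 h8
        rw [h3, h5]
        rw [h2, h4] at h1
        rw [h8] at h7
        have hζ1 : (1:ℝ) ≤ ζ ω := by rw [h6.1]; linarith [h6.2]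
        have hpow : (ζ ω) ^ (n + 1) ≤ (ζ ω) ^ (n + 1 + 1) :=
          pow_le_pow_right₀ hζ1 (by omega)
        nlinarith [pow_nonneg (by linarith : (0:ℝ) ≤ ζ ω) (n + 1)]
      · push_neg at hle
        have hLn : Lc ≤ Lc * (n + 1) := le_mul_of_one_le_right hLc.le (by push_cast; linarith)
        have ht2 : t - Lc ∈ Icc (0:ℝ) (Lc * (n + 1)) := by
          constructor
          · linarith
          · have := ht.2; push_cast at this ⊢; linarith
        have hcomp : T t z = T Lc (T (t - Lc) z) := by
          have heq := hT.comp_eq Lc (t - Lc) hLc.le (by linarith)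
          have ht' : Lc + (t - Lc) = t := by ring
          rw [ht'] at heq
          rw [heq, LinearMap.comp_apply]
        have h1 := hbnd Lc ⟨hLc.le, le_refl _⟩ (T (t - Lc) z)
        have h2 := ih (t - Lc) ht2 z
        rw [hcomp, aux_le_iff]
        filter_upwards [aux_le_iff.mp h1, aux_le_iff.mp h2,
          aux_mul_coe ξ₀ (nrm (T (t - Lc) z)), aux_mul_coe (ζ ^ (n + 1)) (nrm z),
          aux_mul_coe (ζ ^ (n + 1 + 1)) (nrm z), aux_pow_coe ζ (n + 1),
          aux_pow_coe ζ (n + 1 + 1), hζω, aux_le_iff.mp (h.nonneg z),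
          aux_le_iff.mp (h.nonneg (T (t - Lc) z)), aux_zero_coe]
          with ω h1 h2 h3 h4 h5 h6 h7 h8 h9 h10 h11
        rw [h5, h7]
        rw [h3] at h1
        rw [h4, h6] at h2
        rw [h11] at h9 h10
        have hζnn : (0:ℝ) ≤ ζ ω := by rw [h8.1]; linarith [h8.2]
        have e1 : nrm (T Lc (T (t - Lc) z)) ω ≤ ξ₀ ω * ((ζ ω) ^ (n + 1) * nrm z ω) :=
          le_trans h1 (mul_le_mul_of_nonneg_left h2 h8.2)
        have e2 : ξ₀ ω ≤ ζ ω := by rw [h8.1]; linarith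
        have e3 : ξ₀ ω * ((ζ ω) ^ (n + 1) * nrm z ω) ≤ ζ ω * ((ζ ω) ^ (n + 1) * nrm z ω) :=
          mul_le_mul_of_nonneg_right e2 (mul_nonneg (pow_nonneg hζnn _) h9)
        calc nrm (T Lc (T (t - Lc) z)) ω ≤ ζ ω * ((ζ ω) ^ (n + 1) * nrm z ω) :=
              le_trans e1 e3
          _ = (ζ ω) ^ (n + 1 + 1) * nrm z ω := by ring
  set n₀ := ⌈r / Lc⌉₊ with hn₀
  have hrle : r ≤ Lc * (n₀ + 1) := by
    by_cases hr0 : r ≤ 0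
    · have : (0:ℝ) < Lc * (n₀ + 1) := by positivity
      linarith
    · push_neg at hr0
      have h1 : r / Lc ≤ n₀ := Nat.le_ceil _
      have h2 : r ≤ n₀ * Lc := (div_le_iff₀ hLc).mp h1
      nlinarith
  refine ⟨ζ ^ (n₀ + 1), ?_, ?_⟩
  · rw [aux_le_iff]
    filter_upwards [aux_pow_coe ζ (n₀ + 1), hζω, aux_zero_coe] with ω h1 h2 h3
    rw [h1, h3]
    exact pow_nonneg (by linarith [h2.2, h2.1.symm ▸ (by linarith [h2.2] : (0:ℝ) ≤ ξ₀ ω + 1)] ) _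
  · intro t ht z
    exact claim n₀ t ⟨ht.1, le_trans ht.2 hrle⟩ z

end Aux4

end RNTheory
namespace RNTheory

section Aux5

variable {Ω : Type*} [MeasurableSpace Ω] {μ : Measure Ω} [IsProbabilityMeasure μ]
variable (K : Type*) [RCLike K]
variable {S : Type*} [AddCommGroup S] [Module (Ω →ₘ[μ] K) S]
variable {nrm : S → Ω →ₘ[μ] ℝ} {T : ℝ → S →ₗ[Ω →ₘ[μ] K] S}

lemma aux_step (h : IsRNNorm K nrm) (hT : IsC0Semigroup K nrm T) {r : ℝ}
    {η : Ω →ₘ[μ] ℝ} (hη : 0 ≤ η) (hbound : ∀ t ∈ Icc (0:ℝ) r, ∀ z, nrm (T t z) ≤ η * nrm z)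
    (x : S) :
    ∀ m : ℕ, ∀ s : ℝ, 0 ≤ s → (m:ℝ) * s ≤ r →
      nrm (T ((m:ℝ) * s) x - x) ≤ AEEqFun.const Ω (m:ℝ) * (η * nrm (T s x - x)) := by
  intro m
  induction m with
  | zero =>
    intro s hs hms
    have hTx : T (((0:ℕ):ℝ) * s) x - x = 0 := by
      push_cast
      rw [zero_mul, hT.id_eq]
      simp
    rw [hTx, aux_nrm_zero K h]
    push_cast
    rw [aux_const_zero, zero_mul]
  | succ m ih =>
    intro s hs hms
    have hm0 : (0:ℝ) ≤ (m:ℝ) * s := by positivity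
    have hms' : (m:ℝ) * s ≤ r := by
      have : (m:ℝ) * s ≤ ((m:ℕ) + 1 : ℝ) * s := by nlinarith
      push_cast at hms
      linarith
    have hdecomp : T (((m + 1 : ℕ):ℝ) * s) x - x
        = T ((m:ℝ) * s) (T s x - x) + (T ((m:ℝ) * s) x - x) := by
      have heq := hT.comp_eq ((m:ℝ) * s) s hm0 hs
      have ht' : (m:ℝ) * s + s = ((m + 1 : ℕ):ℝ) * s := by push_cast; ring
      rw [ht'] at heq
      rw [heq, LinearMap.comp_apply, map_sub]
      abel
    have h1 := h.add_le (T ((m:ℝ) * s) (T s x - x)) (T ((m:ℝ) * s) x - x)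
    rw [← hdecomp] at h1
    have h2 := hbound ((m:ℝ) * s) ⟨hm0, hms'⟩ (T s x - x)
    have h3 := ih s hs hms'
    rw [aux_le_iff]
    set E := nrm (T s x - x) with hE
    filter_upwards [aux_le_iff.mp h1, aux_le_iff.mp h2, aux_le_iff.mp h3,
      aux_add_coe (nrm (T ((m:ℝ) * s) (T s x - x))) (nrm (T ((m:ℝ) * s) x - x)),
      aux_mul_coe η E, aux_mul_coe (AEEqFun.const Ω (m:ℝ)) (η * E),
      aux_mul_coe (AEEqFun.const Ω ((m + 1 : ℕ):ℝ)) (η * E),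
      aux_const_coe (μ := μ) (m:ℝ), aux_const_coe (μ := μ) ((m + 1 : ℕ):ℝ)]
      with ω h1 h2 h3 h4 h5 h6 h7 h8 h9
    rw [h7, h9, h5]
    rw [h4] at h1
    rw [h5] at h2
    rw [h6, h8, h5] at h3
    push_cast at h1 h3 ⊢
    linarith

lemma aux_lip0 (h : IsRNNorm K nrm) (hT : IsC0Semigroup K nrm T)
    {x y : S} (hxy : GenRel K nrm T x y) {r : ℝ} (hr : 0 < r)
    {η : Ω →ₘ[μ] ℝ} (hη : 0 ≤ η) (hbound : ∀ t ∈ Icc (0:ℝ) r, ∀ z, nrm (T t z) ≤ η * nrm z) :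
    ∀ u ∈ Icc (0:ℝ) r, nrm (T u x - x) ≤ η * nrm y * AEEqFun.const Ω u := by
  intro u hu
  rcases eq_or_lt_of_le hu.1 with hu0 | hu0
  · rw [← hu0]
    have hTx : T (0:ℝ) x - x = 0 := by rw [hT.id_eq]; simp
    rw [hTx, aux_nrm_zero K h, aux_const_zero, mul_zero]
  · -- u > 0
    set v : ℝ → S := fun t => rconst K μ t⁻¹ • (T t x - x) with hv
    set a : ℕ → Ω →ₘ[μ] ℝ := fun n => nrm (v (u / (n + 1)) - y) with ha
    have hkey : nrm (T u x - x) - η * nrm y * AEEqFun.const Ω u ≤ 0 := by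
      apply aux_le_zero_of_prob (c := AEEqFun.const Ω u * η)
      · -- 0 ≤ const u * η
        rw [aux_le_iff]
        filter_upwards [aux_mul_coe (AEEqFun.const Ω u) η, aux_const_coe (μ := μ) u,
          aux_le_iff.mp hη, aux_zero_coe] with ω h1 h2 h3 h4
        rw [h1, h2, h4]
        rw [h4] at h3
        positivity
      · intro n
        have := h.nonneg (v (u / (n + 1)) - y)
        rw [aux_le_iff] at this ⊢
        filter_upwards [this] with ω h1
        exact h1
      · -- main estimate
        intro n
        set m : ℕ := n + 1 with hm
        set s : ℝ := u / m with hs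
        have hs0 : 0 < s := by positivity
        have hums : (m:ℝ) * s = u := by
          rw [hs]
          field_simp [show (m:ℝ) ≠ 0 by positivity]
        have hmsr : (m:ℝ) * s ≤ r := by rw [hums]; exact hu.2
        have h1 := aux_step K h hT hη hbound x m s hs0.le hmsr
        rw [hums] at h1
        -- rewrite T s x - x via v s
        have hvs : T s x - x = rconst K μ s • v s := by
          rw [hv]
          simp only []
          rw [smul_smul, aux_rconst_mul, mul_inv_cancel₀ (ne_of_gt hs0), aux_rconst_one,
            one_smul]
        have h2 : nrm (T s x - x) = AEEqFun.const Ω |s| * nrm (v s) := by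
          rw [hvs, h.smul_eq, aux_l0abs_rconst]
        -- triangle for v s
        have h3 : nrm (v s) ≤ nrm y + nrm (v s - y) := by
          have := h.add_le y (v s - y)
          rwa [add_sub_cancel] at this
        rw [aux_le_iff]
        filter_upwards [aux_le_iff.mp h1, aux_le_iff.mp h3,
          aux_sub_coe (nrm (T u x - x)) (η * nrm y * AEEqFun.const Ω u),
          aux_mul_coe (AEEqFun.const Ω (m:ℝ)) (η * nrm (T s x - x)),
          aux_mul_coe η (nrm (T s x - x)),
          aux_mul_coe (η * nrm y) (AEEqFun.const Ω u),
          aux_mul_coe η (nrm y),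
          aux_mul_coe (AEEqFun.const Ω u * η) (a n),
          aux_mul_coe (AEEqFun.const Ω u) η,
          aux_add_coe (nrm y) (nrm (v s - y)),
          aux_le_iff.mp (h.nonneg (v s)),
          aux_const_coe (μ := μ) (m:ℝ), aux_const_coe (μ := μ) u,
          aux_le_iff.mp hη, aux_zero_coe,
          (aux_mul_coe (AEEqFun.const Ω |s|) (nrm (v s))),
          aux_const_coe (μ := μ) |s|,
          aux_le_iff.mp (h.nonneg (v s - y)),
          aux_le_iff.mp (h.nonneg y)]
          with ω e1 e3 e4 e5 e6 e7 e8 e9 e10 e11 e12 e13 e14 e15 e16 e17 e18 e19 e20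
        rw [e4, e7, e8, e14, e9, e10, e14]
        rw [e5, e6, e13] at e1
        rw [e11] at e3
        rw [h2] at e1
        rw [e17, e18] at e1
        rw [e16] at e12 e15 e19 e20
        have habs : |s| = s := abs_of_pos hs0
        rw [habs] at e1
        have hms2 : (m:ℝ) * (η ω * (s * (nrm (v s)) ω)) = u * (η ω * (nrm (v s)) ω) := by
          rw [← hums]; ring
        rw [hms2] at e1
        have e21 : η ω * (nrm (v s)) ω ≤ η ω * ((nrm y) ω + (nrm (v s - y)) ω) :=
          mul_le_mul_of_nonneg_left e3 e15
        have e22 : u * (η ω * (nrm (v s)) ω) ≤ u * (η ω * ((nrm y) ω + (nrm (v s - y)) ω)) :=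
          mul_le_mul_of_nonneg_left e21 hu0.le
        have han : a n = nrm (v s - y) := by
          have harg : u / ((n:ℝ) + 1) = s := by
            rw [hs, hm]; push_cast; ring
          simp only [ha]
          rw [harg]
        rw [han]
        nlinarith
      · -- convergence in probability
        intro ε hε lam hlam
        have hseq : Tendsto (fun n : ℕ => u / (n + 1)) atTop (nhdsWithin 0 (Ioi 0)) := by
          rw [tendsto_nhdsWithin_iff]
          constructor
          · have := tendsto_one_div_add_atTop_nhds_zero_nat.const_mul u
            simp only [mul_one_div, mul_zero] at this
            exact this
          · filter_upwards with n
            exact div_pos hu0 (by positivity)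
        have hcomp : Tendsto (fun n : ℕ => v (u / (n + 1))) atTop
            (@nhds S (elTop nrm) y) := hxy.comp hseq
        have := (aux_tendsto_prob K h hcomp hε hlam).exists
        obtain ⟨n, hn⟩ := this
        exact ⟨n, hn⟩
    -- conclude
    rw [aux_le_iff]
    filter_upwards [aux_le_iff.mp hkey,
      aux_sub_coe (nrm (T u x - x)) (η * nrm y * AEEqFun.const Ω u), aux_zero_coe]
      with ω h1 h2 h3
    rw [h2, h3] at h1
    linarith

end Aux5

end RNTheory

/-- Let `{T(t) : t ≥ 0}` be an a.s. bounded `C₀`-semigroup on a complete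
`RN` module `S` with generator `(A, D(A))`. For each `x ∈ D(A)`, the orbit map
`f(t) = T(t)x` is `L⁰`-Lipschitz on every finite interval `[0,r]`. -/
theorem orbit_map_L0_lipschitz
    {Ω : Type*} [MeasurableSpace Ω] (μ : Measure Ω) [IsProbabilityMeasure μ]
    (K : Type*) [RCLike K] {S : Type*} [AddCommGroup S] [Module (Ω →ₘ[μ] K) S]
    (nrm : S → Ω →ₘ[μ] ℝ) (h : IsRNNorm K nrm) (hcomplete : IsCompleteRN nrm)
    (T : ℝ → S →ₗ[Ω →ₘ[μ] K] S) (hT : IsC0Semigroup K nrm T)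
    (hb : IsASBounded K nrm T) :
    ∀ x y, GenRel K nrm T x y → ∀ r : ℝ, 0 < r →
      ∃ ξ : Ω →ₘ[μ] ℝ, 0 ≤ ξ ∧ ∀ t₁ ∈ Icc 0 r, ∀ t₂ ∈ Icc 0 r,
        nrm (T t₁ x - T t₂ x) ≤ ξ * AEEqFun.const Ω |t₁ - t₂| := by
  intro x y hxy r hr
  obtain ⟨η, hη0, hbound⟩ := aux_growth K h hT hb r
  refine ⟨η * (η * nrm y), ?_, ?_⟩
  · rw [aux_le_iff]
    filter_upwards [aux_mul_coe η (η * nrm y), aux_mul_coe η (nrm y),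
      aux_le_iff.mp hη0, aux_le_iff.mp (h.nonneg y), aux_zero_coe] with ω h1 h2 h3 h4 h5
    rw [h1, h2, h5]
    rw [h5] at h3 h4
    positivity
  · intro t₁ ht₁ t₂ ht₂
    have hlip := aux_lip0 K h hT hxy hr hη0 hbound
    have key : ∀ s₁ ∈ Icc (0:ℝ) r, ∀ s₂ ∈ Icc (0:ℝ) r, s₂ ≤ s₁ →
        nrm (T s₁ x - T s₂ x) ≤ η * (η * nrm y) * AEEqFun.const Ω |s₁ - s₂| := by
      intro s₁ hs₁ s₂ hs₂ hle
      have hcomp : T s₁ x - T s₂ x = T s₂ (T (s₁ - s₂) x - x) := by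
        have heq := hT.comp_eq s₂ (s₁ - s₂) hs₂.1 (by linarith)
        have hsum : s₂ + (s₁ - s₂) = s₁ := by ring
        rw [hsum] at heq
        rw [heq, LinearMap.comp_apply, map_sub]
      have h1 := hbound s₂ hs₂ (T (s₁ - s₂) x - x)
      have h2 := hlip (s₁ - s₂) ⟨by linarith, by linarith [hs₁.2, hs₂.1]⟩
      rw [hcomp, aux_le_iff]
      set B := T (s₁ - s₂) x - x with hB
      filter_upwards [aux_le_iff.mp h1, aux_le_iff.mp h2,
        aux_mul_coe η (nrm B),
        aux_mul_coe (η * nrm y) (AEEqFun.const Ω (s₁ - s₂)),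
        aux_mul_coe η (nrm y),
        aux_mul_coe (η * (η * nrm y)) (AEEqFun.const Ω |s₁ - s₂|),
        aux_mul_coe η (η * nrm y),
        aux_const_coe (μ := μ) (s₁ - s₂), aux_const_coe (μ := μ) |s₁ - s₂|,
        aux_le_iff.mp hη0, aux_zero_coe] with ω e1 e2 e3 e4 e5 e6 e7 e8 e9 e10 e11
      rw [e3] at e1
      rw [e4, e5, e8] at e2
      rw [e6, e7, e5, e9]
      rw [e11] at e10
      have habs : |s₁ - s₂| = s₁ - s₂ := abs_of_nonneg (by linarith)
      rw [habs]
      have e12 : η ω * (nrm B) ω ≤ η ω * (η ω * (nrm y) ω * (s₁ - s₂)) :=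
        mul_le_mul_of_nonneg_left e2 e10
      nlinarith
    rcases le_total t₂ t₁ with hle | hle
    · exact key t₁ ht₁ t₂ ht₂ hle
    · have hswap : nrm (T t₁ x - T t₂ x) = nrm (T t₂ x - T t₁ x) := by
        rw [← aux_nrm_neg K h (T t₂ x - T t₁ x), neg_sub]
      rw [hswap, abs_sub_comm]
      exact key t₂ ht₂ t₁ ht₁ hle
end
end
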